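/- arXiv:2203.04247 — 3 statements merged into one kernel-verified Lean document; each statement's English description precedes it below -/
import Mathlib

section
/- Let n ≥ 1 and α > -n. There exist positive constants c_1, c_2 depending only on n and α such that for every R > 0 and every ball B = B(x_B,R) in ℝ^n: c_1·R^n·(max{R,|x_B|})^α ≤ ∫_B |x|^α dx ≤ c_2·R^n·(max{R,|x_B|})^α. -/
open MeasureTheory Metric Set
open scoped ENNReal NNReal BigOperators Classical

noncomputable section

/-- Euclidean `n`-space. -/
abbrev Rn (n : ℕ) := EuclideanSpace ℝ (Fin n)

/-- The conjugate exponent in `ℝ≥0∞`. -/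
def conjE (q : ℝ≥0∞) : ℝ≥0∞ :=
  if q = 1 then ∞ else if q = ∞ then 1
  else ENNReal.ofReal (q.toReal / (q.toReal - 1))

/-- An `L^q`-type quantity on the set `s` for an `ℝ≥0∞`-valued function `g`:
the usual integral expression for `q < ∞`, and the essential supremum for `q = ∞`. -/
def lpOn {n : ℕ} (q : ℝ≥0∞) (g : Rn n → ℝ≥0∞) (s : Set (Rn n)) : ℝ≥0∞ :=
  if q = ∞ then essSup g (volume.restrict s)
  else (∫⁻ y in s, g y ^ q.toReal) ^ (1 / q.toReal)

/-- A weight: measurable, positive and finite a.e., and locally integrable. -/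
def IsWeight {n : ℕ} (u : Rn n → ℝ≥0∞) : Prop :=
  Measurable u ∧ (∀ᵐ x ∂(volume : Measure (Rn n)), 0 < u x ∧ u x < ∞) ∧
    ∀ (x : Rn n) (R : ℝ), 0 < R → ∫⁻ y in ball x R, u y < ∞

/-- The `i`-th factor in the `ℍ_m(p⃗,γ,δ)` condition, where `q = p_i'` is the
conjugate exponent of `p_i` (an essential supremum when `p_i = 1`). -/
def HmFactor {n : ℕ} (m : ℕ) (γi : ℝ) (q : ℝ≥0∞) (vi : Rn n → ℝ≥0∞)
    (xB : Rn n) (R : ℝ) : ℝ≥0∞ :=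
  lpOn q
    (fun y => (vi y)⁻¹ *
      (volume (ball xB R) ^ ((n : ℝ)⁻¹) + edist xB y) ^
        (-((n : ℝ) - γi + 1 / (m : ℝ))))
    Set.univ

/-- The class `ℍ_m(p⃗,γ,δ)` for a pair `(w, v⃗)`. -/
def Hm {n : ℕ} (m : ℕ) (γv : Fin m → ℝ) (δ : ℝ) (p : Fin m → ℝ≥0∞)
    (w : Rn n → ℝ≥0∞) (v : Fin m → Rn n → ℝ≥0∞) : Prop :=
  ∃ C : ℝ, 0 < C ∧ ∀ (xB : Rn n) (R : ℝ), 0 < R →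
    essSup w (volume.restrict (ball xB R)) *
        volume (ball xB R) ^ (-((δ - 1) / (n : ℝ))) *
        ∏ i, HmFactor m (γv i) (conjE (p i)) (v i) xB R
      ≤ ENNReal.ofReal C

/-- The global condition associated to `ℍ_m(p⃗,γ,δ)`. -/
def GlobalCond {n : ℕ} (m : ℕ) (γv : Fin m → ℝ) (δ : ℝ) (p : Fin m → ℝ≥0∞)
    (w : Rn n → ℝ≥0∞) (v : Fin m → Rn n → ℝ≥0∞) : Prop :=
  ∃ C : ℝ, 0 < C ∧ ∀ (xB : Rn n) (R : ℝ), 0 < R →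
    essSup w (volume.restrict (ball xB R)) *
        volume (ball xB R) ^ (-((δ - 1) / (n : ℝ))) *
        ∏ i, lpOn (conjE (p i))
          (fun y => (v i y)⁻¹ * edist xB y ^ (-((n : ℝ) - γv i + 1 / (m : ℝ))))
          (ball xB R)ᶜ
      ≤ ENNReal.ofReal C

/-- The local condition associated to `ℍ_m(p⃗,γ,δ)`. -/
def LocalCond {n : ℕ} (m : ℕ) (γ δ : ℝ) (p : Fin m → ℝ≥0∞)
    (w : Rn n → ℝ≥0∞) (v : Fin m → Rn n → ℝ≥0∞) : Prop :=
  ∃ C : ℝ, 0 < C ∧ ∀ (xB : Rn n) (R : ℝ), 0 < R →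
    essSup w (volume.restrict (ball xB R)) *
        volume (ball xB R) ^
          (-(δ / (n : ℝ)) + γ / (n : ℝ) - ∑ i, ((p i)⁻¹).toReal) *
        ∏ i, (volume (ball xB R) ^ (-(((conjE (p i))⁻¹).toReal)) *
          lpOn (conjE (p i)) (fun y => (v i y)⁻¹) (ball xB R))
      ≤ ENNReal.ofReal C

/-- The reverse Hölder class `RH_s`. -/
def memRH {n : ℕ} (s : ℝ) (u : Rn n → ℝ≥0∞) : Prop :=
  ∃ C : ℝ, 0 < C ∧ ∀ (x : Rn n) (R : ℝ), 0 < R →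
    ((volume (ball x R))⁻¹ * ∫⁻ y in ball x R, u y ^ s) ^ (1 / s) ≤
      ENNReal.ofReal C * ((volume (ball x R))⁻¹ * ∫⁻ y in ball x R, u y)

/-- The reverse Hölder class `RH_∞`. -/
def memRHinf {n : ℕ} (u : Rn n → ℝ≥0∞) : Prop :=
  ∃ C : ℝ, 0 < C ∧ ∀ (x : Rn n) (R : ℝ), 0 < R →
    essSup u (volume.restrict (ball x R)) ≤
      ENNReal.ofReal C * ((volume (ball x R))⁻¹ * ∫⁻ y in ball x R, u y)

/-- Doubling condition for an `ℝ≥0∞`-valued weight. -/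
def IsDoubling {n : ℕ} (u : Rn n → ℝ≥0∞) : Prop :=
  ∃ C : ℝ, 0 < C ∧ ∀ (x : Rn n) (R : ℝ), 0 < R →
    ∫⁻ y in ball x (2 * R), u y ≤ ENNReal.ofReal C * ∫⁻ y in ball x R, u y

/-- The multilinear class `A_{p⃗,∞}`. -/
def ApInfty {n : ℕ} (m : ℕ) (p : Fin m → ℝ≥0∞) (v : Fin m → Rn n → ℝ≥0∞) : Prop :=
  ∃ C : ℝ, 0 < C ∧ ∀ (xB : Rn n) (R : ℝ), 0 < R →
    essSup (fun x => ∏ i, v i x) (volume.restrict (ball xB R)) *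
        ∏ i, (volume (ball xB R) ^ (-(((conjE (p i))⁻¹).toReal)) *
          lpOn (conjE (p i)) (fun y => (v i y)⁻¹) (ball xB R))
      ≤ ENNReal.ofReal C

/-- The kernel of the modified multilinear fractional operator `J_{γ,m}`. -/
def Jker {n : ℕ} (m : ℕ) (γ : ℝ) (x : Rn n) (y : Fin m → Rn n) : ℝ :=
  (∑ i, dist x (y i)) ^ (γ - (m : ℝ) * (n : ℝ)) -
    (if ∀ i, y i ∈ ball (0 : Rn n) 1 then 0
     else (∑ i, dist (0 : Rn n) (y i)) ^ (γ - (m : ℝ) * (n : ℝ)))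

/-- The modified multilinear fractional operator `J_{γ,m}`. -/
def Jop {n m : ℕ} (γ : ℝ) (f : Fin m → Rn n → ℝ) (x : Rn n) : ℝ :=
  ∫ y : Fin m → Rn n, Jker m γ x y * ∏ i, f i (y i)

/-- The vector `(1,…,1)` in `ℝⁿ`. -/
def uvec (n : ℕ) : Rn n := (EuclideanSpace.equiv (Fin n) ℝ).symm fun _ => 1

/-- The quadrant `A` associated to a ball with center `xB`. -/
def Aset {n : ℕ} (xB : Rn n) : Set (Rn n) := {y | ∀ i, xB i ≤ y i}

/-- The set `C₁` associated to a ball `B(xB,R)`. -/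
def C1set {n : ℕ} (xB : Rn n) (R : ℝ) : Set (Rn n) :=
  ball (xB - (R / (12 * Real.sqrt n)) • uvec n) (R / (12 * Real.sqrt n)) ∩
    {y | ∀ i, y i ≤ (xB - (R / (12 * Real.sqrt n)) • uvec n) i}

/-- The set `C₂` associated to a ball `B(xB,R)`. -/
def C2set {n : ℕ} (xB : Rn n) (R : ℝ) : Set (Rn n) :=
  ball (xB - (R / (3 * Real.sqrt n)) • uvec n) (2 * R / 3) ∩
    {y | ∀ i, y i ≤ (xB - (R / (3 * Real.sqrt n)) • uvec n) i}

lemma s11_norm_single_one (n : ℕ) (hn : 1 ≤ n) :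
    ‖EuclideanSpace.single (⟨0,hn⟩ : Fin n) (1:ℝ)‖ = 1 := by
  simp [EuclideanSpace.norm_single]

lemma s11_nontriv (n : ℕ) (hn : 1 ≤ n) : Nontrivial (Rn n) := by
  refine nontrivial_of_ne (EuclideanSpace.single (⟨0,hn⟩ : Fin n) (1:ℝ)) 0 ?_
  intro h
  have := s11_norm_single_one n hn
  rw [h] at this; simp at this

lemma s11_vol_ball (n : ℕ) (hn : 1 ≤ n) (x : Rn n) (r : ℝ) (hr : 0 ≤ r) :
    volume (ball x r) = ENNReal.ofReal (r ^ n) * volume (ball (0 : Rn n) 1) := by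
  have := s11_nontriv n hn
  rw [Measure.addHaar_ball volume x hr, finrank_euclideanSpace_fin]

lemma s11_meas_f (n : ℕ) (α : ℝ) : Measurable (fun x : Rn n => ENNReal.ofReal (‖x‖ ^ α)) := by
  fun_prop

lemma s11_vol1_lt_top (n : ℕ) : volume (ball (0 : Rn n) 1) < ⊤ := measure_ball_lt_top
lemma s11_vol1_pos (n : ℕ) : 0 < volume (ball (0 : Rn n) 1) := measure_ball_pos _ _ one_pos

lemma s11_centered_upper (n : ℕ) (hn : 1 ≤ n) (α : ℝ) (hα : -(n:ℝ) < α) :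
    ∃ K : ℝ, 0 < K ∧ ∀ r : ℝ, 0 < r →
      (∫⁻ x in ball (0:Rn n) r, ENNReal.ofReal (‖x‖ ^ α)) ≤
        ENNReal.ofReal (K * r ^ ((n:ℝ) + α)) := by
  haveI := s11_nontriv n hn
  set q : ℝ := (2⁻¹ : ℝ) ^ ((n:ℝ) + α) with hq
  have hna : 0 < (n:ℝ) + α := by linarith
  have hq0 : 0 < q := Real.rpow_pos_of_pos (by norm_num) _
  have hq1 : q < 1 := Real.rpow_lt_one (by norm_num) (by norm_num) hna
  set V : ℝ := (volume (ball (0 : Rn n) 1)).toReal with hV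
  have hVpos : 0 < V := ENNReal.toReal_pos (s11_vol1_pos n).ne' (s11_vol1_lt_top n).ne
  have hVeq : volume (ball (0 : Rn n) 1) = ENNReal.ofReal V :=
    (ENNReal.ofReal_toReal (s11_vol1_lt_top n).ne).symm
  have h2a : (0:ℝ) < 2 ^ |α| := Real.rpow_pos_of_pos (by norm_num) _
  refine ⟨2 ^ |α| * V * (1 - q)⁻¹, mul_pos (mul_pos h2a hVpos) (inv_pos.mpr (by linarith)), fun r hr => ?_⟩
  set ρ : ℕ → ℝ := fun k => r * (2⁻¹ : ℝ) ^ k with hρ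
  have hρpos : ∀ k, 0 < ρ k := fun k => by positivity
  have hρsucc : ∀ k, ρ (k+1) = ρ k * 2⁻¹ := fun k => by simp [hρ, pow_succ]; ring
  set A : ℕ → Set (Rn n) := fun k => ball (0:Rn n) (ρ k) \ ball 0 (ρ (k+1)) with hA
  -- covering
  have hcov : ball (0:Rn n) r ⊆ {0} ∪ ⋃ k, A k := by
    intro x hx
    rcases eq_or_ne x 0 with h0 | h0
    · exact Or.inl (by simp [h0])
    have hxpos : 0 < ‖x‖ := norm_pos_iff.mpr h0
    have hex : ∃ k, ρ (k+1) ≤ ‖x‖ := by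
      obtain ⟨m, hm⟩ := exists_pow_lt_of_lt_one (div_pos hxpos hr) (by norm_num : (2⁻¹:ℝ) < 1)
      refine ⟨m, ?_⟩
      have : ρ m < ‖x‖ := by
        rw [hρ]
        calc r * (2⁻¹:ℝ)^m < r * (‖x‖/r) := by
              exact mul_lt_mul_of_pos_left hm hr
          _ = ‖x‖ := by field_simp
      have h2 : ρ (m+1) ≤ ρ m := by
        rw [hρsucc]
        nlinarith [hρpos m]
      linarith
    let k₀ := Nat.find hex
    have hk₀ : ρ (k₀ + 1) ≤ ‖x‖ := Nat.find_spec hex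
    have hup : ‖x‖ < ρ k₀ := by
      rcases Nat.eq_zero_or_pos k₀ with h | h
      · rw [h]; simpa [hρ] using mem_ball_zero_iff.mp hx
      · obtain ⟨j, hj⟩ := Nat.exists_eq_succ_of_ne_zero h.ne'
        have := Nat.find_min hex (by omega : j < k₀)
        rw [hj]
        exact lt_of_not_ge this
    refine Or.inr (mem_iUnion.mpr ⟨k₀, ?_⟩)
    constructor
    · exact mem_ball_zero_iff.mpr hup
    · intro hmem
      exact absurd (mem_ball_zero_iff.mp hmem) (not_lt.mpr hk₀)
  -- per-annulus bound
  have hterm : ∀ k, (∫⁻ x in A k, ENNReal.ofReal (‖x‖ ^ α)) ≤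
      (ENNReal.ofReal (2^|α|) * ENNReal.ofReal (r ^ ((n:ℝ)+α)) * ENNReal.ofReal V) *
        (ENNReal.ofReal q) ^ k := by
    intro k
    have hpt : ∀ x ∈ A k, ENNReal.ofReal (‖x‖ ^ α) ≤
        ENNReal.ofReal (2^|α| * ρ k ^ α) := by
      intro x hxk
      obtain ⟨hx1, hx2⟩ := hxk
      have hlow : ρ (k+1) ≤ ‖x‖ := not_lt.mp (fun h => hx2 (mem_ball_zero_iff.mpr h))
      have hup : ‖x‖ < ρ k := mem_ball_zero_iff.mp hx1
      apply ENNReal.ofReal_le_ofReal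
      rcases le_or_gt 0 α with hs | hs
      · have h1 : ‖x‖ ^ α ≤ ρ k ^ α := Real.rpow_le_rpow (norm_nonneg x) hup.le hs
        have h2 : (1:ℝ) ≤ 2 ^ |α| := Real.one_le_rpow one_le_two (abs_nonneg α)
        nlinarith [Real.rpow_nonneg (le_of_lt (hρpos k)) α]
      · have h1 : ‖x‖ ^ α ≤ ρ (k+1) ^ α :=
          Real.rpow_le_rpow_of_nonpos (hρpos (k+1)) hlow hs.le
        have h2 : ρ (k+1) ^ α = ρ k ^ α * 2 ^ |α| := by
          rw [hρsucc, Real.mul_rpow (hρpos k).le (by norm_num),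
            abs_of_neg hs, Real.inv_rpow (by norm_num), ← Real.rpow_neg (by norm_num)]
        rw [h2] at h1; linarith
    have hvol : volume (A k) ≤ ENNReal.ofReal (ρ k ^ n) * ENNReal.ofReal V := by
      rw [← hVeq, ← s11_vol_ball n hn 0 (ρ k) (hρpos k).le]
      exact measure_mono diff_subset
    calc (∫⁻ x in A k, ENNReal.ofReal (‖x‖ ^ α))
        ≤ ENNReal.ofReal (2^|α| * ρ k ^ α) * volume (A k) :=
          (setLIntegral_mono measurable_const hpt).trans_eq (setLIntegral_const _ _)
      _ ≤ ENNReal.ofReal (2^|α| * ρ k ^ α) * (ENNReal.ofReal (ρ k ^ n) * ENNReal.ofReal V) :=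
          mul_le_mul_right hvol _
      _ = (ENNReal.ofReal (2^|α|) * ENNReal.ofReal (r ^ ((n:ℝ)+α)) * ENNReal.ofReal V) *
            (ENNReal.ofReal q) ^ k := by
          rw [← ENNReal.ofReal_pow hq0.le]
          rw [← ENNReal.ofReal_mul h2a.le, ← ENNReal.ofReal_mul (by positivity),
            ← ENNReal.ofReal_mul (by positivity), ← ENNReal.ofReal_mul (by positivity),
            ← ENNReal.ofReal_mul (by positivity)]
          congr 1
          have key : ρ k ^ α * ρ k ^ n = r ^ ((n:ℝ)+α) * q ^ k := by
            have e1 : (ρ k : ℝ) ^ (n : ℕ) = ρ k ^ ((n:ℝ)) := (Real.rpow_natCast _ n).symm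
            have e2 : ρ k ^ α * ρ k ^ ((n:ℝ)) = ρ k ^ ((n:ℝ) + α) := by
              rw [← Real.rpow_add (hρpos k)]; ring_nf
            have e3 : ρ k ^ ((n:ℝ) + α) = r ^ ((n:ℝ)+α) * q ^ k := by
              rw [hρ]
              rw [Real.mul_rpow hr.le (by positivity)]
              congr 1
              rw [← Real.rpow_natCast (2⁻¹:ℝ) k, ← Real.rpow_mul (by norm_num),
                mul_comm (k:ℝ), Real.rpow_mul (by norm_num), Real.rpow_natCast]
            rw [e1, e2, e3]
          calc (2:ℝ)^|α| * ρ k ^ α * (ρ k ^ n * V)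
              = 2^|α| * (ρ k ^ α * ρ k ^ n) * V := by ring
            _ = 2^|α| * (r ^ ((n:ℝ)+α) * q ^ k) * V := by rw [key]
            _ = 2^|α| * r ^ ((n:ℝ)+α) * V * q ^ k := by ring
  -- assemble
  calc (∫⁻ x in ball (0:Rn n) r, ENNReal.ofReal (‖x‖ ^ α))
      ≤ ∫⁻ x in ({0} ∪ ⋃ k, A k : Set (Rn n)), ENNReal.ofReal (‖x‖ ^ α) :=
        lintegral_mono_set hcov
    _ ≤ (∫⁻ x in ({0} : Set (Rn n)), ENNReal.ofReal (‖x‖ ^ α)) +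
          ∫⁻ x in (⋃ k, A k), ENNReal.ofReal (‖x‖ ^ α) := lintegral_union_le _ _ _
    _ ≤ 0 + ∑' k, ∫⁻ x in A k, ENNReal.ofReal (‖x‖ ^ α) := by
        gcongr
        · exact le_of_eq (setLIntegral_measure_zero _ _ (measure_singleton 0))
        · exact lintegral_iUnion_le _ _
    _ ≤ 0 + ∑' k, (ENNReal.ofReal (2^|α|) * ENNReal.ofReal (r ^ ((n:ℝ)+α)) *
          ENNReal.ofReal V) * (ENNReal.ofReal q) ^ k := by
        gcongr with k
        exact hterm k
    _ = (ENNReal.ofReal (2^|α|) * ENNReal.ofReal (r ^ ((n:ℝ)+α)) * ENNReal.ofReal V) *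
          (1 - ENNReal.ofReal q)⁻¹ := by
        rw [zero_add, ENNReal.tsum_mul_left, ENNReal.tsum_geometric]
    _ = ENNReal.ofReal (2 ^ |α| * V * (1 - q)⁻¹ * r ^ ((n:ℝ) + α)) := by
        have : (1 : ℝ≥0∞) - ENNReal.ofReal q = ENNReal.ofReal (1 - q) := by
          rw [ENNReal.ofReal_sub _ hq0.le, ENNReal.ofReal_one]
        rw [this, ← ENNReal.ofReal_inv_of_pos (by linarith)]
        rw [← ENNReal.ofReal_mul h2a.le, ← ENNReal.ofReal_mul (by positivity),
          ← ENNReal.ofReal_mul (by positivity)]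
        congr 1
        ring

lemma s11_norm_bds {E : Type*} [NormedAddCommGroup E] (x z : E) :
    ‖z‖ - ‖x - z‖ ≤ ‖x‖ ∧ ‖x‖ ≤ ‖z‖ + ‖x - z‖ := by
  have h := abs_norm_sub_norm_le x z
  obtain ⟨h1, h2⟩ := abs_le.mp h
  constructor <;> linarith

lemma s11_subball (n : ℕ) (hn : 1 ≤ n) (xB : Rn n) (R : ℝ) (hR : 0 < R) :
    ∃ z : Rn n, ball z (R/8) ⊆ ball xB R ∧
      ∀ x ∈ ball z (R/8), (max R ‖xB‖)/8 ≤ ‖x‖ ∧ ‖x‖ ≤ 3 * max R ‖xB‖ := by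
  set M := max R ‖xB‖ with hM
  have hRM : R ≤ M := le_max_left _ _
  have hxM : ‖xB‖ ≤ M := le_max_right _ _
  have hMpos : 0 < M := lt_of_lt_of_le hR hRM
  rcases le_or_gt (R/2) ‖xB‖ with h | h
  · refine ⟨xB, ball_subset_ball (by linarith), fun x hx => ?_⟩
    rw [mem_ball, dist_eq_norm] at hx
    obtain ⟨h1, h2⟩ := s11_norm_bds x xB
    have hMle : M ≤ 8 * ‖xB‖ - R := max_le (by linarith) (by linarith)
    exact ⟨by linarith, by linarith⟩
  · have hMR : M = R := max_eq_left (by linarith)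
    set e := EuclideanSpace.single (⟨0,hn⟩ : Fin n) (1:ℝ) with he
    set z := xB + (3*R/4) • e with hz
    have hze : z - xB = (3*R/4) • e := by rw [hz]; abel
    have hnsm : ‖(3*R/4) • e‖ = 3*R/4 := by
      rw [norm_smul, s11_norm_single_one n hn, mul_one, Real.norm_eq_abs,
        abs_of_nonneg (by linarith : (0:ℝ) ≤ 3*R/4)]
    have hdzx : dist z xB = 3*R/4 := by rw [dist_eq_norm, hze, hnsm]
    have hnz : 3*R/4 - ‖xB‖ ≤ ‖z‖ := by
      have h1 : ‖z - xB‖ ≤ ‖z‖ + ‖xB‖ := norm_sub_le _ _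
      rw [hze, hnsm] at h1
      linarith
    have hnz2 : ‖z‖ ≤ ‖xB‖ + 3*R/4 := by
      have h1 := norm_add_le xB ((3*R/4) • e)
      rw [hnsm] at h1
      rw [hz]; exact h1
    refine ⟨z, fun x hx => ?_, fun x hx => ?_⟩
    · rw [mem_ball] at hx ⊢
      calc dist x xB ≤ dist x z + dist z xB := dist_triangle _ _ _
        _ < R/8 + 3*R/4 := by rw [hdzx] at *; linarith
        _ < R := by linarith
    · rw [mem_ball, dist_eq_norm] at hx
      obtain ⟨h1, h2⟩ := s11_norm_bds x z
      exact ⟨by rw [hMR]; linarith, by rw [hMR]; linarith⟩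


set_option maxHeartbeats 1000000 in
/-- for `α > -n`, `∫_B |x|^α dx ≈ Rⁿ (max{R,|x_B|})^α` with
constants depending only on `n` and `α`. -/
theorem statement11 {n : ℕ} (hn : 1 ≤ n) (α : ℝ) (hα : -(n : ℝ) < α) :
    ∃ c₁ c₂ : ℝ, 0 < c₁ ∧ 0 < c₂ ∧ ∀ (xB : Rn n) (R : ℝ), 0 < R →
      ENNReal.ofReal (c₁ * R ^ n * (max R ‖xB‖) ^ α) ≤
        (∫⁻ x in ball xB R, ENNReal.ofReal (‖x‖ ^ α)) ∧
      (∫⁻ x in ball xB R, ENNReal.ofReal (‖x‖ ^ α)) ≤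
        ENNReal.ofReal (c₂ * R ^ n * (max R ‖xB‖) ^ α) := by
  haveI := s11_nontriv n hn
  obtain ⟨K, hK, hKub⟩ := s11_centered_upper n hn α hα
  set V : ℝ := (volume (ball (0 : Rn n) 1)).toReal with hV
  have hVlt : volume (ball (0 : Rn n) 1) < ⊤ := measure_ball_lt_top
  have hVpos : 0 < V :=
    ENNReal.toReal_pos (measure_ball_pos _ _ one_pos).ne' hVlt.ne
  have hVeq : volume (ball (0 : Rn n) 1) = ENNReal.ofReal V :=
    (ENNReal.ofReal_toReal hVlt.ne).symm
  set cm : ℝ := min ((8:ℝ)⁻¹ ^ α) ((3:ℝ) ^ α) with hcm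
  have hcmpos : 0 < cm :=
    lt_min (Real.rpow_pos_of_pos (by norm_num) _) (Real.rpow_pos_of_pos (by norm_num) _)
  set cM : ℝ := max ((2:ℝ)⁻¹ ^ α) ((2:ℝ) ^ α) with hcM
  have hcMpos : 0 < cM := lt_max_of_lt_left (Real.rpow_pos_of_pos (by norm_num) _)
  have h3pos : (0:ℝ) < 3 ^ ((n:ℝ)+α) := Real.rpow_pos_of_pos (by norm_num) _
  set cB : ℝ := max 1 ((2:ℝ)⁻¹ ^ α) with hcB
  have hcBpos : 0 < cB := lt_max_of_lt_left one_pos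
  refine ⟨cm * (8:ℝ)⁻¹ ^ n * V, max (cM * V) (K * 3 ^ ((n:ℝ)+α) * cB),
    by positivity, lt_max_of_lt_left (by positivity), fun xB R hR => ?_⟩
  set M := max R ‖xB‖ with hM
  have hRM : R ≤ M := le_max_left _ _
  have hxM : ‖xB‖ ≤ M := le_max_right _ _
  have hMpos : 0 < M := lt_of_lt_of_le hR hRM
  have hMα : 0 < M ^ α := Real.rpow_pos_of_pos hMpos _
  have hRn : 0 < R ^ n := pow_pos hR n
  constructor
  · -- LOWER BOUND
    obtain ⟨z, hsub, hbd⟩ := s11_subball n hn xB R hR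
    have hpt : ∀ x ∈ ball z (R/8),
        ENNReal.ofReal (M ^ α * cm) ≤ ENNReal.ofReal (‖x‖ ^ α) := by
      intro x hx
      obtain ⟨hx1, hx2⟩ := hbd x hx
      apply ENNReal.ofReal_le_ofReal
      have hxpos : 0 < ‖x‖ := lt_of_lt_of_le (by positivity) hx1
      rcases le_or_gt 0 α with hs | hs
      · have h1 : (M/8) ^ α ≤ ‖x‖ ^ α := Real.rpow_le_rpow (by positivity) hx1 hs
        have h2 : (M/8 : ℝ) ^ α = M ^ α * (8:ℝ)⁻¹ ^ α := by
          rw [div_eq_mul_inv, Real.mul_rpow hMpos.le (by norm_num)]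
        have h3 : cm ≤ (8:ℝ)⁻¹ ^ α := min_le_left _ _
        nlinarith
      · have h1 : (3*M) ^ α ≤ ‖x‖ ^ α :=
          Real.rpow_le_rpow_of_nonpos hxpos hx2 hs.le
        have h2 : ((3:ℝ)*M) ^ α = 3 ^ α * M ^ α := Real.mul_rpow (by norm_num) hMpos.le
        have h3 : cm ≤ (3:ℝ) ^ α := min_le_right _ _
        nlinarith
    have hvolz : volume (ball z (R/8)) = ENNReal.ofReal ((R/8) ^ n) * ENNReal.ofReal V := by
      rw [s11_vol_ball n hn z (R/8) (by linarith), hVeq]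
    calc ENNReal.ofReal (cm * (8:ℝ)⁻¹ ^ n * V * R ^ n * M ^ α)
        = ENNReal.ofReal (M ^ α * cm) * (ENNReal.ofReal ((R/8) ^ n) * ENNReal.ofReal V) := by
          rw [← ENNReal.ofReal_mul (by positivity), ← ENNReal.ofReal_mul (by positivity)]
          congr 1
          rw [div_pow, div_eq_mul_inv, ← inv_pow]
          ring
      _ = ENNReal.ofReal (M ^ α * cm) * volume (ball z (R/8)) := by rw [hvolz]
      _ ≤ ∫⁻ x in ball z (R/8), ENNReal.ofReal (‖x‖ ^ α) :=
          (setLIntegral_const _ _).symm.trans_le (setLIntegral_mono' measurableSet_ball hpt)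
      _ ≤ ∫⁻ x in ball xB R, ENNReal.ofReal (‖x‖ ^ α) := lintegral_mono_set hsub
  · -- UPPER BOUND
    rcases le_or_gt (2*R) ‖xB‖ with hcase | hcase
    · -- far case
      have hMx : M = ‖xB‖ := max_eq_right (by linarith)
      have hpt : ∀ x ∈ ball xB R,
          ENNReal.ofReal (‖x‖ ^ α) ≤ ENNReal.ofReal (M ^ α * cM) := by
        intro x hx
        rw [mem_ball, dist_eq_norm] at hx
        obtain ⟨h1, h2⟩ := s11_norm_bds x xB
        have hlo : M/2 ≤ ‖x‖ := by rw [hMx] at *; linarith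
        have hhi : ‖x‖ ≤ 2*M := by rw [hMx] at *; linarith
        apply ENNReal.ofReal_le_ofReal
        rcases le_or_gt 0 α with hs | hs
        · have hb : ‖x‖ ^ α ≤ (2*M) ^ α := Real.rpow_le_rpow (norm_nonneg x) hhi hs
          have h2' : ((2:ℝ)*M) ^ α = 2 ^ α * M ^ α := Real.mul_rpow (by norm_num) hMpos.le
          have h3 : (2:ℝ) ^ α ≤ cM := le_max_right _ _
          nlinarith
        · have hb : ‖x‖ ^ α ≤ (M/2) ^ α :=
            Real.rpow_le_rpow_of_nonpos (by positivity) hlo hs.le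
          have h2' : (M/2 : ℝ) ^ α = M ^ α * (2:ℝ)⁻¹ ^ α := by
            rw [div_eq_mul_inv, Real.mul_rpow hMpos.le (by norm_num)]
          have h3 : (2:ℝ)⁻¹ ^ α ≤ cM := le_max_left _ _
          nlinarith
      calc (∫⁻ x in ball xB R, ENNReal.ofReal (‖x‖ ^ α))
          ≤ ENNReal.ofReal (M ^ α * cM) * volume (ball xB R) :=
            (setLIntegral_mono measurable_const hpt).trans_eq (setLIntegral_const _ _)
        _ = ENNReal.ofReal (M ^ α * cM * (R ^ n * V)) := by
            rw [s11_vol_ball n hn xB R hR.le, hVeq, ← ENNReal.ofReal_mul (by positivity),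
              ← ENNReal.ofReal_mul (by positivity)]
        _ ≤ ENNReal.ofReal (max (cM * V) (K * 3 ^ ((n:ℝ)+α) * cB) * R ^ n * M ^ α) := by
            apply ENNReal.ofReal_le_ofReal
            have h4 : cM * V ≤ max (cM * V) (K * 3 ^ ((n:ℝ)+α) * cB) := le_max_left _ _
            calc M ^ α * cM * (R ^ n * V) = (cM * V) * (R ^ n) * (M ^ α) := by ring
              _ ≤ max (cM * V) (K * 3 ^ ((n:ℝ)+α) * cB) * R ^ n * M ^ α :=
                mul_le_mul_of_nonneg_right
                  (mul_le_mul_of_nonneg_right h4 hRn.le) hMα.le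
    · -- near case
      have hM2R : M ≤ 2*R := max_le (by linarith) hcase.le
      have hsub3 : ball xB R ⊆ ball (0 : Rn n) (3*R) := by
        intro x hx
        rw [mem_ball, dist_eq_norm] at hx
        rw [mem_ball_zero_iff]
        obtain ⟨h1, h2⟩ := s11_norm_bds x xB
        linarith
      have hRα : R ^ α ≤ cB * M ^ α := by
        rcases le_or_gt 0 α with hs | hs
        · have : R ^ α ≤ M ^ α := Real.rpow_le_rpow hR.le hRM hs
          have h1 : (1:ℝ) ≤ cB := le_max_left _ _
          nlinarith
        · have hb : R ^ α ≤ (M/2) ^ α :=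
            Real.rpow_le_rpow_of_nonpos (by positivity) (by linarith) hs.le
          have h2' : (M/2 : ℝ) ^ α = M ^ α * (2:ℝ)⁻¹ ^ α := by
            rw [div_eq_mul_inv, Real.mul_rpow hMpos.le (by norm_num)]
          have h3 : (2:ℝ)⁻¹ ^ α ≤ cB := le_max_right _ _
          nlinarith
      calc (∫⁻ x in ball xB R, ENNReal.ofReal (‖x‖ ^ α))
          ≤ ∫⁻ x in ball (0 : Rn n) (3*R), ENNReal.ofReal (‖x‖ ^ α) :=
            lintegral_mono_set hsub3
        _ ≤ ENNReal.ofReal (K * (3*R) ^ ((n:ℝ)+α)) := hKub (3*R) (by linarith)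
        _ ≤ ENNReal.ofReal (max (cM * V) (K * 3 ^ ((n:ℝ)+α) * cB) * R ^ n * M ^ α) := by
            apply ENNReal.ofReal_le_ofReal
            have e1 : ((3:ℝ)*R) ^ ((n:ℝ)+α) = 3 ^ ((n:ℝ)+α) * (R ^ n * R ^ α) := by
              rw [Real.mul_rpow (by norm_num) hR.le, Real.rpow_add hR,
                Real.rpow_natCast]
            rw [e1]
            have h4 : K * 3 ^ ((n:ℝ)+α) * cB ≤ max (cM * V) (K * 3 ^ ((n:ℝ)+α) * cB) :=
              le_max_right _ _
            calc K * (3 ^ ((n:ℝ)+α) * (R ^ n * R ^ α))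
                ≤ K * (3 ^ ((n:ℝ)+α) * (R ^ n * (cB * M ^ α))) := by
                  have := hRα
                  gcongr
              _ = (K * 3 ^ ((n:ℝ)+α) * cB) * R ^ n * M ^ α := by ring
              _ ≤ max (cM * V) (K * 3 ^ ((n:ℝ)+α) * cB) * R ^ n * M ^ α :=
                mul_le_mul_of_nonneg_right
                  (mul_le_mul_of_nonneg_right h4 hRn.le) hMα.le
end
end

section
/- Let 0 < γ < mn, take γ_i = γ/m for every i, let p⃗ be a vector of exponents, and let δ = γ - mn. Fix α > 0 and, for each i ∈ I_2, a nonnegative function g_i ∈ L^{p_i'}(ℝ^n). Put m_1 = #I_1 and define w(x) = (1+|x|^α)^{-m_1}, v_i(x) = e^{|x|} for i ∈ I_1, and v_i = g_i^{-1} for i ∈ I_2 (with v_i^{-1} := g_i). Then the pair (w,v⃗) satisfies the ℍ_m(p⃗,γ,γ-mn) inequality. -/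
open MeasureTheory Metric Set
open scoped ENNReal NNReal BigOperators Classical

noncomputable section

section AuxStatement17

lemma conjE_ne_top' {q : ℝ≥0∞} (hq : q ≠ 1) : conjE q ≠ ∞ := by
  unfold conjE
  rw [if_neg hq]
  split <;> simp

lemma conjE_toReal_pos' {q : ℝ≥0∞} (hq1 : 1 ≤ q) (hq : q ≠ 1) :
    0 < (conjE q).toReal := by
  unfold conjE
  rw [if_neg hq]
  by_cases htop : q = ∞
  · simp [htop]
  · rw [if_neg htop]
    have h1 : (1 : ℝ) < q.toReal := by
      have := (ENNReal.toReal_lt_toReal (by simp) htop).2 (lt_of_le_of_ne hq1 (Ne.symm hq))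
      simpa using this
    have hpos : 0 < q.toReal / (q.toReal - 1) := div_pos (by linarith) (by linarith)
    rw [ENNReal.toReal_ofReal hpos.le]
    exact hpos

end AuxStatement17

/-- examples at the endpoint `δ = γ - mn`. -/
theorem statement17 {n m : ℕ} (hn : 1 ≤ n) (hm : 1 ≤ m) (γ : ℝ) (hγ0 : 0 < γ)
    (hγ : γ < m * n) (p : Fin m → ℝ≥0∞) (hp : ∀ i, 1 ≤ p i)
    (α : ℝ) (hα : 0 < α) (g : Fin m → Rn n → ℝ)
    (hg0 : ∀ i, p i ≠ 1 → ∀ x, 0 ≤ g i x)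
    (hg : ∀ i, p i ≠ 1 → MemLp (g i) (conjE (p i)) volume) :
    Hm m (fun _ => γ / m) (γ - m * n) p
      (fun x => ENNReal.ofReal
        ((1 + ‖x‖ ^ α) ^ (-(Nat.card {i : Fin m // p i = 1} : ℝ))))
      (fun i x => if p i = 1 then ENNReal.ofReal (Real.exp ‖x‖)
        else (ENNReal.ofReal (g i x))⁻¹) := by
  classical
  have hn0 : (0:ℝ) < (n:ℝ) := by exact_mod_cast hn
  have hm0 : (0:ℝ) < (m:ℝ) := by exact_mod_cast hm
  set e : ℝ := (n:ℝ) - γ / (m:ℝ) + 1 / (m:ℝ) with hedef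
  have he0 : 0 < e := by
    have h1 : γ / (m:ℝ) < (n:ℝ) := (div_lt_iff₀ hm0).2 (by nlinarith)
    have h2 : 0 < 1 / (m:ℝ) := by positivity
    rw [hedef]; linarith
  set Ni : Fin m → ℝ≥0∞ := fun i =>
    if p i = 1 then 1 else eLpNorm (g i) (conjE (p i)) volume with hNi
  set P : ℝ≥0∞ := ∏ i, Ni i with hP
  have hNilt : ∀ i, Ni i < ∞ := by
    intro i
    rw [hNi]
    by_cases hpi : p i = 1
    · simp [hpi]
    · simpa [hpi] using (hg i hpi).2
  have hPlt : P < ∞ := ENNReal.prod_lt_top (fun i _ => hNilt i)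
  refine ⟨P.toReal + 1, by positivity, ?_⟩
  intro xB R hR
  set V := volume (ball xB R) with hV
  have hV0 : V ≠ 0 := (measure_ball_pos volume xB hR).ne'
  have hVtop : V ≠ ∞ := measure_ball_lt_top.ne
  set B : ℝ≥0∞ := V ^ ((n:ℝ)⁻¹) with hB
  have hB0 : 0 < B := ENNReal.rpow_pos (hV0.bot_lt) hVtop
  have hBtop : B ≠ ∞ := ENNReal.rpow_ne_top_of_nonneg (by positivity) hVtop
  set A : ℝ≥0∞ := B ^ (-e) with hA
  have hAtop : A ≠ ∞ := by
    rw [hA, ENNReal.rpow_neg]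
    exact ENNReal.inv_ne_top.2 (ENNReal.rpow_pos hB0 hBtop).ne'
  -- kernel bound
  have hker : ∀ y : Rn n, (B + edist xB y) ^ (-e) ≤ A := by
    intro y
    rw [hA, ENNReal.rpow_neg, ENNReal.rpow_neg]
    exact ENNReal.inv_le_inv' (ENNReal.rpow_le_rpow le_self_add he0.le)
  -- weight bound
  have hw : essSup (fun x : Rn n => ENNReal.ofReal
      ((1 + ‖x‖ ^ α) ^ (-(Nat.card {i : Fin m // p i = 1} : ℝ))))
      (volume.restrict (ball xB R)) ≤ 1 := by
    refine essSup_le_of_ae_le 1 (Filter.Eventually.of_forall fun x => ?_)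
    refine ENNReal.ofReal_le_one.2 ?_
    refine Real.rpow_le_one_of_one_le_of_nonpos ?_ (neg_nonpos.2 (Nat.cast_nonneg _))
    have := Real.rpow_nonneg (norm_nonneg x) α
    linarith
  -- factor bounds
  have hfac : ∀ i : Fin m, HmFactor m (γ / m) (conjE (p i))
      ((fun i x => if p i = 1 then ENNReal.ofReal (Real.exp ‖x‖)
        else (ENNReal.ofReal (g i x))⁻¹) i) xB R ≤ A * Ni i := by
    intro i
    by_cases hpi : p i = 1
    · have hq : conjE (p i) = ∞ := by rw [hpi]; simp [conjE]
      rw [HmFactor, hq, lpOn, if_pos rfl, Measure.restrict_univ]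
      simp only [← hV, ← hB, ← hedef]
      have hNi1 : Ni i = 1 := by rw [hNi]; simp [hpi]
      rw [hNi1, mul_one]
      refine essSup_le_of_ae_le A (Filter.Eventually.of_forall fun y => ?_)
      simp only [hpi, if_pos]
      calc (ENNReal.ofReal (Real.exp ‖y‖))⁻¹ * (B + edist xB y) ^ (-e)
          ≤ 1 * A := by
            refine mul_le_mul' (ENNReal.inv_le_one.2 ?_) (hker y)
            exact ENNReal.one_le_ofReal.2 (Real.one_le_exp (norm_nonneg y))
        _ = A := one_mul A
    · have hqtop : conjE (p i) ≠ ∞ := conjE_ne_top' hpi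
      have ht : 0 < (conjE (p i)).toReal := conjE_toReal_pos' (hp i) hpi
      have hq0 : conjE (p i) ≠ 0 := by
        intro h; rw [h] at ht; simp at ht
      set t := (conjE (p i)).toReal with htdef
      have hNival : Ni i = eLpNorm (g i) (conjE (p i)) volume := by
        rw [hNi]; simp [hpi]
      rw [HmFactor, lpOn, if_neg hqtop, setLIntegral_univ, ← hV, ← hB, ← hedef]
      have hbound : ∀ y : Rn n,
          (((if p i = 1 then ENNReal.ofReal (Real.exp ‖y‖)
            else (ENNReal.ofReal (g i y))⁻¹))⁻¹ * (B + edist xB y) ^ (-e)) ^ t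
          ≤ ((‖g i y‖₊ : ℝ≥0∞)) ^ t * A ^ t := by
        intro y
        rw [← ENNReal.mul_rpow_of_nonneg _ _ ht.le]
        refine ENNReal.rpow_le_rpow ?_ ht.le
        refine mul_le_mul' ?_ (hker y)
        rw [if_neg hpi, inv_inv]
        calc ENNReal.ofReal (g i y) ≤ ENNReal.ofReal ‖g i y‖ :=
              ENNReal.ofReal_le_ofReal (Real.le_norm_self _)
          _ = (‖g i y‖₊ : ℝ≥0∞) := ofReal_norm _
      calc (∫⁻ y, (((if p i = 1 then ENNReal.ofReal (Real.exp ‖y‖)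
              else (ENNReal.ofReal (g i y))⁻¹))⁻¹ * (B + edist xB y) ^ (-e)) ^ t)
              ^ (1 / t)
          ≤ (∫⁻ y, ((‖g i y‖₊ : ℝ≥0∞)) ^ t * A ^ t) ^ (1 / t) := by
            exact ENNReal.rpow_le_rpow (lintegral_mono hbound) (by positivity)
        _ = ((∫⁻ y, ((‖g i y‖₊ : ℝ≥0∞)) ^ t) * A ^ t) ^ (1 / t) := by
            rw [lintegral_mul_const' _ _
              (ENNReal.rpow_ne_top_of_nonneg ht.le hAtop)]
        _ = (∫⁻ y, ((‖g i y‖₊ : ℝ≥0∞)) ^ t) ^ (1 / t) * (A ^ t) ^ (1 / t) := by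
            rw [ENNReal.mul_rpow_of_nonneg _ _ (by positivity)]
        _ = eLpNorm (g i) (conjE (p i)) volume * A := by
            rw [← ENNReal.rpow_mul, mul_one_div_cancel ht.ne', ENNReal.rpow_one]
            exact congrArg (· * A) (eLpNorm_eq_lintegral_rpow_enorm_toReal (f := g i) (μ := volume) hq0 hqtop).symm
        _ = A * Ni i := by rw [hNival, mul_comm]
  -- combine
  have hprod : (∏ i, HmFactor m (γ / m) (conjE (p i))
      ((fun i x => if p i = 1 then ENNReal.ofReal (Real.exp ‖x‖)
        else (ENNReal.ofReal (g i x))⁻¹) i) xB R) ≤ A ^ m * P := by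
    calc (∏ i, HmFactor m (γ / m) (conjE (p i))
          ((fun i x => if p i = 1 then ENNReal.ofReal (Real.exp ‖x‖)
            else (ENNReal.ofReal (g i x))⁻¹) i) xB R)
        ≤ ∏ i, (A * Ni i) := Finset.prod_le_prod' fun i _ => hfac i
      _ = A ^ m * P := by
          rw [Finset.prod_mul_distrib, Finset.prod_const, Finset.card_univ,
            Fintype.card_fin, hP]
  have hkey : V ^ (-((γ - (m:ℝ) * (n:ℝ) - 1) / (n:ℝ))) * A ^ m = 1 := by
    have hAm : A ^ m = V ^ ((n:ℝ)⁻¹ * (-e) * (m:ℝ)) := by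
      rw [← ENNReal.rpow_natCast A m, hA, hB, ← ENNReal.rpow_mul,
        ← ENNReal.rpow_mul]
      congr 1
      ring
    rw [hAm, ← ENNReal.rpow_add _ _ hV0 hVtop]
    have hz : -((γ - (m:ℝ) * (n:ℝ) - 1) / (n:ℝ)) + (n:ℝ)⁻¹ * (-e) * (m:ℝ) = 0 := by
      rw [hedef]
      field_simp
      ring
    rw [hz, ENNReal.rpow_zero]
  calc essSup (fun x : Rn n => ENNReal.ofReal
          ((1 + ‖x‖ ^ α) ^ (-(Nat.card {i : Fin m // p i = 1} : ℝ))))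
        (volume.restrict (ball xB R)) *
        V ^ (-((γ - (m:ℝ) * (n:ℝ) - 1) / (n:ℝ))) *
        ∏ i, HmFactor m (γ / m) (conjE (p i))
          ((fun i x => if p i = 1 then ENNReal.ofReal (Real.exp ‖x‖)
            else (ENNReal.ofReal (g i x))⁻¹) i) xB R
      ≤ 1 * V ^ (-((γ - (m:ℝ) * (n:ℝ) - 1) / (n:ℝ))) * (A ^ m * P) :=
        mul_le_mul' (mul_le_mul' hw le_rfl) hprod
    _ = (V ^ (-((γ - (m:ℝ) * (n:ℝ) - 1) / (n:ℝ))) * A ^ m) * P := by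
        rw [one_mul, mul_assoc]
    _ = P := by rw [hkey, one_mul]
    _ ≤ ENNReal.ofReal (P.toReal + 1) := by
        conv_lhs => rw [← ENNReal.ofReal_toReal hPlt.ne]
        exact ENNReal.ofReal_le_ofReal (by linarith)
end
end

section
/- Let 0 < γ < mn, take γ_i = γ/m for every i, let p⃗ be a vector of exponents, set τ = (γ-mn)(1-1/m)+1/m, and let δ = γ - n/p. Let v_1,…,v_m be weights and w = Π_{i=1}^m v_i. Then (w,v⃗) ∈ ℍ_m(p⃗,γ,δ) implies v⃗ ∈ A_{p⃗,∞}; and if moreover δ < τ, then (w,v⃗) ∈ ℍ_m(p⃗,γ,δ) if and only if v⃗ ∈ A_{p⃗,∞}. -/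
open MeasureTheory Metric Set
open scoped ENNReal NNReal BigOperators Classical

noncomputable section

namespace S18aux

lemma rpow_neg_le {x y : ℝ≥0∞} (h : x ≤ y) {a : ℝ} (ha : 0 ≤ a) :
    y ^ (-a) ≤ x ^ (-a) := by
  rw [ENNReal.rpow_neg, ENNReal.rpow_neg]
  exact ENNReal.inv_le_inv.mpr (ENNReal.rpow_le_rpow h ha)

lemma rpow_neg_ne_top {x : ℝ≥0∞} (hx : x ≠ 0) {a : ℝ} (ha : 0 ≤ a) : x ^ (-a) ≠ ∞ := by
  rw [ENNReal.rpow_neg, Ne, ENNReal.inv_eq_top]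
  simp only [ENNReal.rpow_eq_zero_iff]
  push_neg
  exact ⟨fun h => absurd h hx, fun h => ha⟩

lemma prod_rpow {ι : Type*} (s : Finset ι) (f : ι → ℝ) {x : ℝ≥0∞} (hx : x ≠ 0) (hx' : x ≠ ∞) :
    ∏ i ∈ s, x ^ f i = x ^ (∑ i ∈ s, f i) := by
  classical
  induction s using Finset.induction with
  | empty => simp
  | insert _ _ h ih =>
      rw [Finset.prod_insert h, Finset.sum_insert h, ih, ← ENNReal.rpow_add _ _ hx hx']

lemma iSup_mul_iSup_le_mono (a b : ℕ → ℝ≥0∞) (ha : Monotone a) (hb : Monotone b) :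
    (⨆ N, a N) * (⨆ N, b N) ≤ ⨆ N, a N * b N := by
  rw [ENNReal.iSup_mul]
  refine iSup_le fun N => ?_
  rw [ENNReal.mul_iSup]
  refine iSup_le fun M => ?_
  exact le_iSup_of_le (max N M) (mul_le_mul' (ha (le_max_left _ _)) (hb (le_max_right _ _)))

lemma prod_tsum_le_tsum_prod {m : ℕ} (f : Fin m → ℕ → ℝ≥0∞) :
    (∏ i, ∑' k, f i k) ≤ ∑' g : Fin m → ℕ, ∏ i, f i (g i) := by
  classical
  have hmono : ∀ i : Fin m, Monotone fun N => ∑ k ∈ Finset.range N, f i k := by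
    intro i N M h
    exact Finset.sum_le_sum_of_subset (Finset.range_subset_range.2 h)
  have h1 : (∏ i, ∑' k, f i k) ≤ ⨆ N, ∏ i, ∑ k ∈ Finset.range N, f i k := by
    simp_rw [ENNReal.tsum_eq_iSup_nat]
    -- prod of iSup ≤ iSup of prod, by induction
    have : ∀ s : Finset (Fin m),
        (∏ i ∈ s, ⨆ N, ∑ k ∈ Finset.range N, f i k) ≤
          ⨆ N, ∏ i ∈ s, ∑ k ∈ Finset.range N, f i k := by
      intro s
      induction s using Finset.induction with
      | empty => simp
      | @insert a s h ih =>
          rw [Finset.prod_insert h]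
          calc (⨆ N, ∑ k ∈ Finset.range N, f a k) * ∏ i ∈ s, ⨆ N, ∑ k ∈ Finset.range N, f i k
              ≤ (⨆ N, ∑ k ∈ Finset.range N, f a k) *
                ⨆ N, ∏ i ∈ s, ∑ k ∈ Finset.range N, f i k := by exact mul_le_mul_right ih _
            _ ≤ ⨆ N, (∑ k ∈ Finset.range N, f a k) * ∏ i ∈ s, ∑ k ∈ Finset.range N, f i k := by
                refine iSup_mul_iSup_le_mono _ _ (hmono a) ?_
                intro N M h'
                exact Finset.prod_le_prod' fun i _ => hmono i h'
            _ = ⨆ N, ∏ i ∈ insert a s, ∑ k ∈ Finset.range N, f i k := by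
                simp_rw [Finset.prod_insert h]
    exact this Finset.univ
  refine h1.trans (iSup_le fun N => ?_)
  rw [Finset.prod_univ_sum]
  exact ENNReal.sum_le_tsum _

lemma tsum_le_of_forall_sum_le {ι : Type*} {f : ι → ℝ≥0∞} {c : ℝ≥0∞}
    (h : ∀ s : Finset ι, ∑ i ∈ s, f i ≤ c) : ∑' i, f i ≤ c := by
  rw [ENNReal.tsum_eq_iSup_sum]; exact iSup_le h

lemma tsum_prod_le_prod_tsum {m : ℕ} (f : Fin m → ℕ → ℝ≥0∞) :
    (∑' g : Fin m → ℕ, ∏ i, f i (g i)) ≤ ∏ i, ∑' k, f i k := by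
  classical
  refine tsum_le_of_forall_sum_le fun T => ?_
  set N : ℕ := (T.sup fun g => Finset.univ.sup g) + 1 with hN
  have hsub : T ⊆ Fintype.piFinset fun _ : Fin m => Finset.range N := by
    intro g hg
    rw [Fintype.mem_piFinset]
    intro i
    rw [Finset.mem_range, hN, Nat.lt_succ_iff]
    exact le_trans (Finset.le_sup (Finset.mem_univ i)) (Finset.le_sup hg)
  calc ∑ g ∈ T, ∏ i, f i (g i)
      ≤ ∑ g ∈ Fintype.piFinset fun _ : Fin m => Finset.range N, ∏ i, f i (g i) :=
        Finset.sum_le_sum_of_subset hsub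
    _ = ∏ i, ∑ k ∈ Finset.range N, f i k := (Finset.prod_univ_sum _ _).symm
    _ ≤ ∏ i, ∑' k, f i k := Finset.prod_le_prod' fun i _ => ENNReal.sum_le_tsum _

lemma tsum_rpow_le {a : ℕ → ℝ≥0∞} {r : ℝ} (hr0 : 0 < r) (hr1 : r ≤ 1) :
    (∑' k, a k) ^ r ≤ ∑' k, a k ^ r := by
  have hfin : ∀ s : Finset ℕ, (∑ k ∈ s, a k) ^ r ≤ ∑' k, a k ^ r := by
    intro s
    have : (∑ k ∈ s, a k) ^ r ≤ ∑ k ∈ s, a k ^ r := by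
      induction s using Finset.induction with
      | empty => simp [ENNReal.zero_rpow_of_pos hr0]
      | insert _ _ h ih =>
          rw [Finset.sum_insert h, Finset.sum_insert h]
          exact ((ENNReal.rpow_add_le_add_rpow _ _ hr0.le hr1)).trans (add_le_add_right ih _)
    exact this.trans (ENNReal.sum_le_tsum _)
  have key : (∑' k, a k) ≤ (∑' k, a k ^ r) ^ (1/r) := by
    refine tsum_le_of_forall_sum_le fun s => ?_
    have h2 := hfin s
    calc ∑ k ∈ s, a k = ((∑ k ∈ s, a k) ^ r) ^ (1/r) := by
          rw [← ENNReal.rpow_mul, mul_one_div_cancel hr0.ne', ENNReal.rpow_one]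
      _ ≤ (∑' k, a k ^ r) ^ (1/r) := ENNReal.rpow_le_rpow h2 (by positivity)
  calc (∑' k, a k) ^ r ≤ ((∑' k, a k ^ r) ^ (1/r)) ^ r := ENNReal.rpow_le_rpow key hr0.le
    _ = (∑' k, a k ^ r) ^ ((1/r) * r) := by rw [← ENNReal.rpow_mul]
    _ = _ := by rw [one_div, inv_mul_cancel₀ hr0.ne', ENNReal.rpow_one]

lemma lpOn_mono_set {n : ℕ} (q : ℝ≥0∞) (g : Rn n → ℝ≥0∞) {s t : Set (Rn n)} (hst : s ⊆ t) :
    lpOn q g s ≤ lpOn q g t := by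
  unfold lpOn
  split
  · exact essSup_mono_measure
      (Measure.absolutelyContinuous_of_le (Measure.restrict_mono hst le_rfl))
  · exact ENNReal.rpow_le_rpow (lintegral_mono' (Measure.restrict_mono hst le_rfl) le_rfl)
      (by positivity)

lemma lpOn_mono_on {n : ℕ} {q : ℝ≥0∞} (g h : Rn n → ℝ≥0∞) {s : Set (Rn n)}
    (hs : MeasurableSet s) (hgh : ∀ y ∈ s, g y ≤ h y) : lpOn q g s ≤ lpOn q h s := by
  have hae : ∀ᵐ y ∂(volume.restrict s), g y ≤ h y :=
    (ae_restrict_iff' hs).mpr (Filter.Eventually.of_forall hgh)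
  unfold lpOn
  split
  · exact essSup_mono_ae hae
  · refine ENNReal.rpow_le_rpow (lintegral_mono_ae ?_) (by positivity)
    filter_upwards [hae] with y hy
    exact ENNReal.rpow_le_rpow hy ENNReal.toReal_nonneg

lemma lpOn_const_mul {n : ℕ} {q : ℝ≥0∞} (hq : q = ∞ ∨ 0 < q.toReal) {c : ℝ≥0∞} (hc : c ≠ ∞)
    (g : Rn n → ℝ≥0∞) (s : Set (Rn n)) :
    lpOn q (fun y => c * g y) s = c * lpOn q g s := by
  unfold lpOn
  rcases eq_or_ne q ∞ with h | h
  · rw [if_pos h, if_pos h]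
    exact ENNReal.essSup_const_mul
  · have ht : 0 < q.toReal := hq.resolve_left h
    rw [if_neg h, if_neg h]
    simp_rw [ENNReal.mul_rpow_of_nonneg _ _ ht.le]
    rw [lintegral_const_mul' _ _ (ENNReal.rpow_ne_top_of_nonneg ht.le hc),
      ENNReal.mul_rpow_of_nonneg _ _ (by positivity), ← ENNReal.rpow_mul,
      mul_one_div_cancel ht.ne', ENNReal.rpow_one]

lemma conjE_cases {q : ℝ≥0∞} (hq : 1 ≤ q) :
    conjE q = ∞ ∨ 1 ≤ (conjE q).toReal := by
  unfold conjE
  rcases eq_or_ne q 1 with h | h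
  · simp [h]
  rcases eq_or_ne q ∞ with h' | h'
  · simp [h', h]
  right
  rw [if_neg h, if_neg h']
  have h1 : 1 < q.toReal := by
    rw [← ENNReal.toReal_one]
    exact (ENNReal.toReal_lt_toReal (by simp) h').mpr (lt_of_le_of_ne hq (Ne.symm h))
  have h2 : 1 ≤ q.toReal / (q.toReal - 1) := by
    rw [le_div_iff₀ (by linarith)]
    linarith
  rw [ENNReal.toReal_ofReal (by linarith)]
  exact h2

lemma conjE_inv_toReal {q : ℝ≥0∞} (hq : 1 ≤ q) :
    ((conjE q)⁻¹).toReal = 1 - (q⁻¹).toReal := by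
  unfold conjE
  rcases eq_or_ne q 1 with h | h
  · simp [h]
  rcases eq_or_ne q ∞ with h' | h'
  · simp [h']
  rw [if_neg h, if_neg h']
  have h1 : 1 < q.toReal := by
    rw [← ENNReal.toReal_one]
    exact (ENNReal.toReal_lt_toReal (by simp) h').mpr (lt_of_le_of_ne hq (Ne.symm h))
  rw [ENNReal.toReal_inv, ENNReal.toReal_inv, ENNReal.toReal_ofReal
    (div_nonneg (by linarith) (by linarith) : (0:ℝ) ≤ q.toReal / (q.toReal - 1)),
    ← ENNReal.toReal_inv, ENNReal.toReal_inv]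
  field_simp
lemma nontrivial_Rn {n : ℕ} (hn : 1 ≤ n) : Nontrivial (Rn n) := by
  refine ⟨EuclideanSpace.single ⟨0, hn⟩ (1:ℝ), 0, fun h => ?_⟩
  have h2 : (EuclideanSpace.single ⟨0, hn⟩ (1:ℝ) : Rn n) ⟨0, hn⟩ = (0 : Rn n) ⟨0, hn⟩ := by rw [h]
  rw [EuclideanSpace.single_apply] at h2
  simp at h2

lemma vol_ball {n : ℕ} (hn : 1 ≤ n) (x : Rn n) {R : ℝ} (hR : 0 ≤ R) :
    volume (ball x R) = (ENNReal.ofReal R) ^ (n : ℝ) * volume (ball (0 : Rn n) 1) := by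
  haveI := nontrivial_Rn hn
  rw [Measure.addHaar_ball _ x hR, finrank_euclideanSpace_fin, ENNReal.ofReal_pow hR,
    ← ENNReal.rpow_natCast]

lemma kappa_ne_zero {n : ℕ} : volume (ball (0 : Rn n) 1) ≠ 0 :=
  (measure_ball_pos _ _ one_pos).ne'

lemma kappa_ne_top {n : ℕ} : volume (ball (0 : Rn n) 1) ≠ ∞ :=
  measure_ball_lt_top.ne

lemma vpow_ball {n : ℕ} (hn : 1 ≤ n) (x : Rn n) {R : ℝ} (hR : 0 ≤ R) (a : ℝ) :
    volume (ball x R) ^ a =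
      (ENNReal.ofReal R) ^ ((n : ℝ) * a) * volume (ball (0 : Rn n) 1) ^ a := by
  rw [vol_ball hn x hR, ENNReal.mul_rpow_of_ne_top (by simp) kappa_ne_top,
    ← ENNReal.rpow_mul]

lemma vol_rpow_inv_n {n : ℕ} (hn : 1 ≤ n) (x : Rn n) {R : ℝ} (hR : 0 ≤ R) :
    volume (ball x R) ^ ((n : ℝ)⁻¹) =
      volume (ball (0 : Rn n) 1) ^ ((n : ℝ)⁻¹) * ENNReal.ofReal R := by
  have hn0 : (n : ℝ) ≠ 0 := by positivity
  rw [vpow_ball hn x hR, mul_inv_cancel₀ hn0, ENNReal.rpow_one, mul_comm]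

lemma lpOn_ball_le_HmFactor {n : ℕ} (hn : 1 ≤ n) (mm : ℕ) {q : ℝ≥0∞}
    (hq : q = ∞ ∨ 0 < q.toReal) (v : Rn n → ℝ≥0∞) (xB : Rn n) {R : ℝ} (hR : 0 < R)
    {γi α : ℝ} (hα : 0 ≤ α) (hαeq : α = (n : ℝ) - γi + 1 / (mm : ℝ)) :
    ((volume (ball (0 : Rn n) 1) ^ ((n : ℝ)⁻¹) + 1) * ENNReal.ofReal R) ^ (-α) *
      lpOn q (fun y => (v y)⁻¹) (ball xB R) ≤ HmFactor mm γi q v xB R := by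
  have hK : HmFactor mm γi q v xB R = lpOn q
      (fun y => (v y)⁻¹ *
        (volume (ball xB R) ^ ((n : ℝ)⁻¹) + edist xB y) ^ (-α)) Set.univ := by
    rw [hαeq]; rfl
  set κ := volume (ball (0 : Rn n) 1) with hκdef
  set ρ := ENNReal.ofReal R with hρdef
  set μ0 : ℝ≥0∞ := κ ^ ((n : ℝ)⁻¹) + 1 with hμ0def
  have hμ00 : μ0 ≠ 0 := by simp [hμ0def]
  have hρ0 : ρ ≠ 0 := (ENNReal.ofReal_pos.mpr hR).ne'
  have hcne : (μ0 * ρ) ^ (-α) ≠ ∞ := rpow_neg_ne_top (mul_ne_zero hμ00 hρ0) hα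
  rw [hK, ← lpOn_const_mul hq hcne]
  refine le_trans (lpOn_mono_on _ _ measurableSet_ball ?_) (lpOn_mono_set q _ (subset_univ _))
  intro y hy
  rw [mul_comm]
  refine mul_le_mul_right (rpow_neg_le ?_ hα) _
  have hV : volume (ball xB R) ^ ((n : ℝ)⁻¹) = κ ^ ((n : ℝ)⁻¹) * ρ :=
    vol_rpow_inv_n hn xB hR.le
  have hed : edist xB y ≤ ρ := by
    rw [edist_comm, edist_dist, hρdef]
    exact ENNReal.ofReal_le_ofReal (mem_ball.mp hy).le
  calc volume (ball xB R) ^ ((n : ℝ)⁻¹) + edist xB y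
      ≤ κ ^ ((n : ℝ)⁻¹) * ρ + 1 * ρ := by rw [hV, one_mul]; exact add_le_add_right hed _
    _ = μ0 * ρ := by rw [hμ0def, add_mul]

lemma HmFactor_le_tsum {n : ℕ} (hn : 1 ≤ n) (mm : ℕ) {q : ℝ≥0∞}
    (hq : q = ∞ ∨ 1 ≤ q.toReal) (v : Rn n → ℝ≥0∞) (xB : Rn n) {R : ℝ} (hR : 0 < R)
    {γi α : ℝ} (hα : 0 ≤ α) (hαeq : α = (n : ℝ) - γi + 1 / (mm : ℝ)) :
    HmFactor mm γi q v xB R ≤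
      ∑' k : ℕ,
        (min (volume (ball (0 : Rn n) 1) ^ ((n : ℝ)⁻¹)) 2⁻¹ * 2 ^ k * ENNReal.ofReal R) ^ (-α) *
          lpOn q (fun y => (v y)⁻¹) (ball xB (2 ^ k * R)) := by
  have hK : HmFactor mm γi q v xB R = lpOn q
      (fun y => (v y)⁻¹ *
        (volume (ball xB R) ^ ((n : ℝ)⁻¹) + edist xB y) ^ (-α)) Set.univ := by
    rw [hαeq]; rfl
  set κ := volume (ball (0 : Rn n) 1) with hκdef
  set ρ := ENNReal.ofReal R with hρdef
  set c0 : ℝ≥0∞ := min (κ ^ ((n : ℝ)⁻¹)) 2⁻¹ with hc0def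
  have hρ0 : ρ ≠ 0 := (ENNReal.ofReal_pos.mpr hR).ne'
  have hc00 : c0 ≠ 0 := by
    have h1 : (0:ℝ≥0∞) < κ ^ ((n:ℝ)⁻¹) :=
      ENNReal.rpow_pos (measure_ball_pos _ _ one_pos) kappa_ne_top
    have h2 : (0:ℝ≥0∞) < 2⁻¹ := by norm_num
    exact (lt_min h1 h2).ne'
  set g : Rn n → ℝ≥0∞ :=
    fun y => (v y)⁻¹ * (volume (ball xB R) ^ ((n : ℝ)⁻¹) + edist xB y) ^ (-α) with hgdef
  -- annuli
  set E : ℕ → Set (Rn n) := fun k =>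
    Nat.casesOn k (ball xB R) fun j => ball xB (2 ^ (j + 1) * R) \ ball xB (2 ^ j * R)
    with hEdef
  have hE2 : ∀ k, E k ⊆ ball xB (2 ^ k * R) := by
    intro k
    cases k with
    | zero => rw [pow_zero, one_mul]; exact fun _ h => h
    | succ j => exact diff_subset
  have hEmeas : ∀ k, MeasurableSet (E k) := by
    intro k
    cases k with
    | zero => exact measurableSet_ball
    | succ j => exact measurableSet_ball.diff measurableSet_ball
  have hcover : ∀ y : Rn n, ∃ k, y ∈ E k := by
    intro y
    have hex : ∃ k : ℕ, dist y xB < 2 ^ k * R := by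
      obtain ⟨k, hk⟩ := pow_unbounded_of_one_lt (dist y xB / R) (one_lt_two (α := ℝ))
      exact ⟨k, by rwa [div_lt_iff₀ hR] at hk⟩
    classical
    rcases Nat.eq_zero_or_pos (Nat.find hex) with h0 | hpos
    · refine ⟨0, ?_⟩
      have := Nat.find_spec hex
      rw [h0, pow_zero, one_mul] at this
      exact mem_ball.mpr this
    · obtain ⟨j, hj⟩ := Nat.exists_eq_succ_of_ne_zero hpos.ne'
      have hspec := Nat.find_spec hex
      rw [hj] at hspec
      refine ⟨j + 1, mem_ball.mpr hspec, fun hmem => ?_⟩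
      exact Nat.find_min hex (by omega) (mem_ball.mp hmem)
  have hofReal : ∀ k : ℕ, ENNReal.ofReal (2 ^ k * R) = 2 ^ k * ρ := by
    intro k
    rw [ENNReal.ofReal_mul (by positivity), ENNReal.ofReal_pow (by norm_num)]
    norm_num [hρdef]
  have hbase : ∀ k, ∀ y ∈ E k,
      c0 * 2 ^ k * ρ ≤ volume (ball xB R) ^ ((n : ℝ)⁻¹) + edist xB y := by
    intro k y hy
    cases k with
    | zero =>
        rw [pow_zero, mul_one]
        refine le_trans ?_ le_self_add
        rw [vol_rpow_inv_n hn xB hR.le, ← hκdef, ← hρdef]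
        exact mul_le_mul_left (min_le_left _ _) _
    | succ j =>
        refine le_trans ?_ le_add_self
        have hy2 : y ∉ ball xB (2 ^ j * R) := hy.2
        have hdist : (2 : ℝ) ^ j * R ≤ dist y xB := not_lt.mp (mem_ball.not.mp hy2)
        have hed : (2 : ℝ≥0∞) ^ j * ρ ≤ edist xB y := by
          rw [edist_comm, edist_dist, ← hofReal j]
          exact ENNReal.ofReal_le_ofReal hdist
        refine le_trans ?_ hed
        calc c0 * 2 ^ (j + 1) * ρ ≤ 2⁻¹ * 2 ^ (j + 1) * ρ := by
              exact mul_le_mul_left (mul_le_mul_left (min_le_right _ _) _) _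
          _ = 2 ^ j * ρ := by
              rw [pow_succ, ← mul_assoc, mul_comm (2 : ℝ≥0∞)⁻¹, mul_assoc (2 ^ j : ℝ≥0∞),
                mul_comm (2 : ℝ≥0∞)⁻¹, ENNReal.mul_inv_cancel (by norm_num) (by norm_num),
                mul_one]
  have hgle : ∀ k, ∀ y ∈ E k, g y ≤ (c0 * 2 ^ k * ρ) ^ (-α) * (v y)⁻¹ := by
    intro k y hy
    rw [mul_comm]
    exact mul_le_mul_right (rpow_neg_le (hbase k y hy) hα) _
  rw [hK]
  rcases eq_or_ne q ∞ with hq1 | hq1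
  · subst hq1
    rw [lpOn, if_pos rfl, Measure.restrict_univ]
    have hb : ∀ᵐ x ∂(volume : Measure (Rn n)), ∀ k : ℕ,
        x ∈ ball xB (2 ^ k * R) →
          (v x)⁻¹ ≤ lpOn ∞ (fun y => (v y)⁻¹) (ball xB (2 ^ k * R)) := by
      rw [ae_all_iff]
      intro k
      refine (ae_restrict_iff' measurableSet_ball).mp ?_
      have h := ENNReal.ae_le_essSup (μ := volume.restrict (ball xB (2 ^ k * R)))
        (fun y => (v y)⁻¹)
      simpa [lpOn] using h
    refine essSup_le_of_ae_le _ ?_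
    filter_upwards [hb] with x hx
    obtain ⟨k, hk⟩ := hcover x
    calc g x ≤ (c0 * 2 ^ k * ρ) ^ (-α) * (v x)⁻¹ := hgle k x hk
      _ ≤ (c0 * 2 ^ k * ρ) ^ (-α) * lpOn ∞ (fun y => (v y)⁻¹) (ball xB (2 ^ k * R)) :=
          mul_le_mul_right (hx k (hE2 k hk)) _
      _ ≤ _ := ENNReal.le_tsum k
  · have ht : 1 ≤ q.toReal := hq.resolve_left hq1
    have ht0 : 0 < q.toReal := lt_of_lt_of_le one_pos ht
    have hqor : q = ∞ ∨ 0 < q.toReal := Or.inr ht0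
    have hcktop : ∀ k : ℕ, (c0 * 2 ^ k * ρ) ^ (-α) ≠ ∞ := fun k =>
      rpow_neg_ne_top (mul_ne_zero (mul_ne_zero hc00 (by positivity)) hρ0) hα
    have hU : (⋃ k, E k) = Set.univ := eq_univ_of_forall fun y => mem_iUnion.2 (hcover y)
    rw [lpOn, if_neg hq1]
    calc (∫⁻ y in Set.univ, g y ^ q.toReal) ^ (1 / q.toReal)
        = (∫⁻ y in ⋃ k, E k, g y ^ q.toReal) ^ (1 / q.toReal) := by rw [hU]
      _ ≤ (∑' k, ∫⁻ y in E k, g y ^ q.toReal) ^ (1 / q.toReal) :=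
          ENNReal.rpow_le_rpow (lintegral_iUnion_le _ _) (by positivity)
      _ ≤ ∑' k, (∫⁻ y in E k, g y ^ q.toReal) ^ (1 / q.toReal) :=
          tsum_rpow_le (by positivity) (by
            rw [div_le_one ht0]; exact ht)
      _ ≤ _ := by
          refine ENNReal.tsum_le_tsum fun k => ?_
          have h1 : (∫⁻ y in E k, g y ^ q.toReal) ^ (1 / q.toReal) = lpOn q g (E k) := by
            rw [lpOn, if_neg hq1]
          rw [h1]
          calc lpOn q g (E k)
              ≤ lpOn q (fun y => (c0 * 2 ^ k * ρ) ^ (-α) * (v y)⁻¹) (E k) :=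
                lpOn_mono_on _ _ (hEmeas k) (hgle k)
            _ = (c0 * 2 ^ k * ρ) ^ (-α) * lpOn q (fun y => (v y)⁻¹) (E k) :=
                lpOn_const_mul hqor (hcktop k) _ _
            _ ≤ (c0 * 2 ^ k * ρ) ^ (-α) * lpOn q (fun y => (v y)⁻¹) (ball xB (2 ^ k * R)) :=
                mul_le_mul_right (lpOn_mono_set _ _ (hE2 k)) _
lemma rpow_ne_top' {x : ℝ≥0∞} (h0 : x ≠ 0) (ht : x ≠ ∞) (a : ℝ) : x ^ a ≠ ∞ := by
  simp [ENNReal.rpow_eq_top_iff, h0, ht]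

lemma rpow_ne_zero' {x : ℝ≥0∞} (h0 : x ≠ 0) (ht : x ≠ ∞) (a : ℝ) : x ^ a ≠ 0 := by
  simp [ENNReal.rpow_eq_zero_iff, h0, ht]

lemma le_ofReal_self_add_one {x : ℝ≥0∞} (hx : x ≠ ∞) : x ≤ ENNReal.ofReal (x.toReal + 1) :=
  calc x = ENNReal.ofReal x.toReal := (ENNReal.ofReal_toReal hx).symm
    _ ≤ _ := ENNReal.ofReal_le_ofReal (by linarith)

end S18aux

set_option maxHeartbeats 1600000 in
/-- with `δ = γ - n/p` and `w = ∏ v_i`, membership in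
`ℍ_m(p⃗,γ,δ)` implies `v⃗ ∈ A_{p⃗,∞}`; and if moreover `δ < τ`, then
`ℍ_m(p⃗,γ,δ)` and `A_{p⃗,∞}` coincide. -/
theorem statement18 {n m : ℕ} (hn : 1 ≤ n) (hm : 1 ≤ m) (γ δ τ : ℝ) (hγ0 : 0 < γ)
    (hγ : γ < m * n) (p : Fin m → ℝ≥0∞) (hp : ∀ i, 1 ≤ p i)
    (hτ : τ = (γ - m * n) * (1 - 1 / (m : ℝ)) + 1 / (m : ℝ))
    (hδ : δ = γ - n * ∑ i, ((p i)⁻¹).toReal)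
    (v : Fin m → Rn n → ℝ≥0∞) (hv : ∀ i, IsWeight (v i)) :
    (Hm m (fun _ => γ / m) δ p (fun x => ∏ i, v i x) v → ApInfty m p v) ∧
      (δ < τ →
        (Hm m (fun _ => γ / m) δ p (fun x => ∏ i, v i x) v ↔ ApInfty m p v)) := by
  classical
  have hn' : (0:ℝ) < n := by exact_mod_cast hn
  have hm' : (0:ℝ) < m := by exact_mod_cast hm
  have hn0 : (n:ℝ) ≠ 0 := hn'.ne'
  have hm0 : (m:ℝ) ≠ 0 := hm'.ne'
  have hκ0 : volume (ball (0 : Rn n) 1) ≠ 0 := S18aux.kappa_ne_zero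
  have hκt : volume (ball (0 : Rn n) 1) ≠ ∞ := S18aux.kappa_ne_top
  set κ : ℝ≥0∞ := volume (ball (0 : Rn n) 1) with hκdef
  set α : ℝ := (n:ℝ) - γ/m + 1/m with hαdef
  have hγm : γ / m < n := by
    rw [div_lt_iff₀ hm']
    calc γ < m * n := hγ
      _ = (n:ℝ) * m := by ring
  have hα0 : 0 < α := by
    have h1 : (0:ℝ) < 1/m := by positivity
    rw [hαdef]; linarith
  set P : ℝ := ∑ i, ((p i)⁻¹).toReal with hPdef
  have hδ' : δ = γ - n * P := hδ
  set e : Fin m → ℝ := fun i => ((conjE (p i))⁻¹).toReal with hedef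
  have he : ∀ i, e i = 1 - ((p i)⁻¹).toReal := fun i => S18aux.conjE_inv_toReal (hp i)
  set s : ℝ := ∑ i, e i with hsdef
  have hs : s = m - P := by
    rw [hsdef, hPdef]
    calc (∑ i, e i) = ∑ i : Fin m, (1 - ((p i)⁻¹).toReal) := Finset.sum_congr rfl fun i _ => he i
      _ = (m:ℝ) - ∑ i, ((p i)⁻¹).toReal := by
          rw [Finset.sum_sub_distrib, Finset.sum_const, Finset.card_univ, Fintype.card_fin,
            nsmul_eq_mul, mul_one]
  have hq : ∀ i, conjE (p i) = ∞ ∨ 1 ≤ (conjE (p i)).toReal := fun i => S18aux.conjE_cases (hp i)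
  have hq' : ∀ i, conjE (p i) = ∞ ∨ 0 < (conjE (p i)).toReal :=
    fun i => (hq i).imp id fun h => lt_of_lt_of_le one_pos h
  have hsum_e : ∀ (x : ℝ≥0∞), x ≠ 0 → x ≠ ∞ →
      (∏ i, x ^ (-(e i))) = x ^ (-s) := by
    intro x hx0 hxt
    rw [S18aux.prod_rpow Finset.univ (fun i => -(e i)) hx0 hxt]
    congr 1
    rw [hsdef]
    exact Finset.sum_neg_distrib _
  have hexpkey : -(δ - 1) - α * m + n * s = 0 := by
    have h1 : α * m = (n:ℝ) * m - γ + 1 := by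
      rw [hαdef]; field_simp; try ring
    have h2 : (n:ℝ) * s = (n:ℝ) * m - (n:ℝ) * P := by rw [hs]; ring
    linarith [hδ']
  -- Direction 1 : Hm → ApInfty
  have dir1 : Hm m (fun _ => γ / m) δ p (fun x => ∏ i, v i x) v → ApInfty m p v := by
    rintro ⟨C, hC, hHm⟩
    set μ0 : ℝ≥0∞ := κ ^ ((n:ℝ)⁻¹) + 1 with hμ0def
    have hμ00 : μ0 ≠ 0 := by simp [hμ0def]
    have hμ0t : μ0 ≠ ∞ := by
      rw [hμ0def]
      exact ENNReal.add_ne_top.mpr ⟨S18aux.rpow_ne_top' hκ0 hκt _, ENNReal.one_ne_top⟩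
    set D0 : ℝ≥0∞ := κ ^ ((δ-1)/(n:ℝ) - s) * μ0 ^ (α * m) with hD0def
    have hD0t : D0 ≠ ∞ :=
      ENNReal.mul_ne_top (S18aux.rpow_ne_top' hκ0 hκt _) (S18aux.rpow_ne_top' hμ00 hμ0t _)
    refine ⟨C * (D0.toReal + 1), by positivity, ?_⟩
    intro xB R hR
    set ρ : ℝ≥0∞ := ENNReal.ofReal R with hρdef
    have hρ0 : ρ ≠ 0 := (ENNReal.ofReal_pos.mpr hR).ne'
    have hρt : ρ ≠ ∞ := ENNReal.ofReal_ne_top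
    set V : ℝ≥0∞ := volume (ball xB R) with hVdef
    have hV0 : V ≠ 0 := (measure_ball_pos _ _ hR).ne'
    have hVt : V ≠ ∞ := measure_ball_lt_top.ne
    have hμρ0 : μ0 * ρ ≠ 0 := mul_ne_zero hμ00 hρ0
    have hμρt : μ0 * ρ ≠ ∞ := ENNReal.mul_ne_top hμ0t hρt
    have hLF : ∀ i : Fin m,
        lpOn (conjE (p i)) (fun y => (v i y)⁻¹) (ball xB R) ≤
          (μ0 * ρ) ^ α * HmFactor m (γ/(m:ℝ)) (conjE (p i)) (v i) xB R := by
      intro i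
      have h := S18aux.lpOn_ball_le_HmFactor hn m (hq' i) (v i) xB hR hα0.le hαdef
      calc lpOn (conjE (p i)) (fun y => (v i y)⁻¹) (ball xB R)
          = ((μ0 * ρ) ^ α * (μ0 * ρ) ^ (-α)) *
              lpOn (conjE (p i)) (fun y => (v i y)⁻¹) (ball xB R) := by
            rw [← ENNReal.rpow_add _ _ hμρ0 hμρt]
            simp
        _ = (μ0 * ρ) ^ α *
            ((μ0 * ρ) ^ (-α) * lpOn (conjE (p i)) (fun y => (v i y)⁻¹) (ball xB R)) :=
            mul_assoc _ _ _
        _ ≤ (μ0 * ρ) ^ α * HmFactor m (γ/(m:ℝ)) (conjE (p i)) (v i) xB R :=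
            mul_le_mul_right h _
    have hxx : V ^ (-((δ - 1) / (n:ℝ))) * V ^ ((δ - 1) / (n:ℝ)) = 1 := by
      rw [← ENNReal.rpow_add _ _ hV0 hVt]
      simp
    have hconst : V ^ ((δ - 1) / (n:ℝ)) * V ^ (-s) * (μ0 * ρ) ^ (α * m) = D0 := by
      rw [S18aux.vpow_ball hn xB hR.le ((δ - 1) / (n:ℝ)), S18aux.vpow_ball hn xB hR.le (-s),
        ENNReal.mul_rpow_of_ne_top hμ0t hρt, ← hκdef, ← hρdef, hD0def]
      have hρcomb : ρ ^ ((n:ℝ) * ((δ-1)/(n:ℝ))) * ρ ^ ((n:ℝ) * (-s)) * ρ ^ (α * m) =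
          ρ ^ ((n:ℝ) * ((δ-1)/(n:ℝ)) + (n:ℝ) * (-s) + α * m) := by
        rw [← ENNReal.rpow_add _ _ hρ0 hρt, ← ENNReal.rpow_add _ _ hρ0 hρt]
      have hzero : (n:ℝ) * ((δ-1)/(n:ℝ)) + (n:ℝ) * (-s) + α * m = 0 := by
        have h2 : (n:ℝ) * ((δ-1)/(n:ℝ)) = δ - 1 := by field_simp
        rw [h2]
        linarith [hexpkey]
      have hκcomb : κ ^ ((δ-1)/(n:ℝ)) * κ ^ (-s) = κ ^ ((δ-1)/(n:ℝ) - s) := by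
        rw [← ENNReal.rpow_add _ _ hκ0 hκt]
        congr 1
        try ring
      calc ρ ^ ((n:ℝ) * ((δ-1)/(n:ℝ))) * κ ^ ((δ-1)/(n:ℝ)) *
            (ρ ^ ((n:ℝ) * (-s)) * κ ^ (-s)) * (μ0 ^ (α * m) * ρ ^ (α * m))
          = (ρ ^ ((n:ℝ) * ((δ-1)/(n:ℝ))) * ρ ^ ((n:ℝ) * (-s)) * ρ ^ (α * m)) *
            (κ ^ ((δ-1)/(n:ℝ)) * κ ^ (-s)) * μ0 ^ (α * m) := by ring
        _ = κ ^ ((δ-1)/(n:ℝ) - s) * μ0 ^ (α * m) := by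
            rw [hρcomb, hzero, ENNReal.rpow_zero, one_mul, hκcomb]
    calc essSup (fun x => ∏ i, v i x) (volume.restrict (ball xB R)) *
          ∏ i, (V ^ (-(((conjE (p i))⁻¹).toReal)) *
            lpOn (conjE (p i)) (fun y => (v i y)⁻¹) (ball xB R))
        ≤ essSup (fun x => ∏ i, v i x) (volume.restrict (ball xB R)) *
          ∏ i, (V ^ (-(e i)) *
            ((μ0 * ρ) ^ α * HmFactor m (γ/(m:ℝ)) (conjE (p i)) (v i) xB R)) := by
          refine mul_le_mul_right (Finset.prod_le_prod' fun i _ => ?_) _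
          exact mul_le_mul_right (hLF i) _
      _ = essSup (fun x => ∏ i, v i x) (volume.restrict (ball xB R)) *
          (V ^ (-s) * ((μ0 * ρ) ^ (α * m) *
            ∏ i, HmFactor m (γ/(m:ℝ)) (conjE (p i)) (v i) xB R)) := by
          rw [Finset.prod_mul_distrib, Finset.prod_mul_distrib, hsum_e V hV0 hVt,
            Finset.prod_const, Finset.card_univ, Fintype.card_fin,
            ← ENNReal.rpow_natCast ((μ0 * ρ) ^ α) m, ← ENNReal.rpow_mul]
          try ring
      _ = (essSup (fun x => ∏ i, v i x) (volume.restrict (ball xB R)) *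
            V ^ (-((δ - 1) / (n:ℝ))) *
            ∏ i, HmFactor m (γ/(m:ℝ)) (conjE (p i)) (v i) xB R) *
          (V ^ ((δ - 1) / (n:ℝ)) * V ^ (-s) * (μ0 * ρ) ^ (α * m)) := by
          rw [show essSup (fun x => ∏ i, v i x) (volume.restrict (ball xB R)) *
              (V ^ (-s) * ((μ0 * ρ) ^ (α * m) *
                ∏ i, HmFactor m (γ/(m:ℝ)) (conjE (p i)) (v i) xB R)) =
              (V ^ (-((δ - 1) / (n:ℝ))) * V ^ ((δ - 1) / (n:ℝ))) *
              (essSup (fun x => ∏ i, v i x) (volume.restrict (ball xB R)) *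
              (V ^ (-s) * ((μ0 * ρ) ^ (α * m) *
                ∏ i, HmFactor m (γ/(m:ℝ)) (conjE (p i)) (v i) xB R))) by
            rw [hxx, one_mul]]
          try ring
      _ ≤ ENNReal.ofReal C * D0 := by
          rw [← hconst]
          exact mul_le_mul_left (hHm xB R hR) _
      _ ≤ ENNReal.ofReal (C * (D0.toReal + 1)) := by
          rw [ENNReal.ofReal_mul hC.le]
          exact mul_le_mul_right (S18aux.le_ofReal_self_add_one hD0t) _
  -- Direction 2 : ApInfty → Hm (assuming δ < τ)
  have dir2 : δ < τ → ApInfty m p v →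
      Hm m (fun _ => γ / m) δ p (fun x => ∏ i, v i x) v := by
    rintro hδτ ⟨C, hC, hAp⟩
    set c0 : ℝ≥0∞ := min (κ ^ ((n:ℝ)⁻¹)) 2⁻¹ with hc0def
    have hc00 : c0 ≠ 0 := by
      have h1 : (0:ℝ≥0∞) < κ ^ ((n:ℝ)⁻¹) :=
        ENNReal.rpow_pos (measure_ball_pos _ _ one_pos) hκt
      have h2 : (0:ℝ≥0∞) < 2⁻¹ := by norm_num
      exact (lt_min h1 h2).ne'
    have hc0t : c0 ≠ ∞ := by
      refine (lt_of_le_of_lt (min_le_right _ _) ?_).ne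
      norm_num
    have hexpneg : (n:ℝ) * s - α < 0 := by
      have h1 : α * m = (n:ℝ) * m - γ + 1 := by
        rw [hαdef]; field_simp; try ring
      have hτ' : τ * m = (γ - m*n) * (m - 1) + 1 := by
        rw [hτ]; field_simp; try ring
      have hns : ((n:ℝ) * s - α) * m = (δ - τ) * m := by
        rw [hs]
        nlinarith [hτ', h1, hδ']
      have h3 : ((n:ℝ) * s - α) * m < 0 := by
        rw [hns]
        have : δ - τ < 0 := by linarith
        exact mul_neg_of_neg_of_pos this hm'
      nlinarith [hm']
    set r : ℝ≥0∞ := (2:ℝ≥0∞) ^ ((n:ℝ) * s - α) with hrdef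
    have hr1 : r < 1 := ENNReal.rpow_lt_one_of_one_lt_of_neg (by norm_num) hexpneg
    have hSt : (1 - r)⁻¹ ≠ ∞ := by
      rw [Ne, ENNReal.inv_eq_top]
      exact (tsub_pos_of_lt hr1).ne'
    set D1 : ℝ≥0∞ := ENNReal.ofReal C * c0 ^ (-(α * (m:ℝ))) * κ ^ (s + -((δ-1)/(n:ℝ))) *
      ((1 - r)⁻¹) ^ (m:ℕ) with hD1def
    have hD1t : D1 ≠ ∞ := by
      refine ENNReal.mul_ne_top (ENNReal.mul_ne_top (ENNReal.mul_ne_top ?_ ?_) ?_) ?_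
      · exact ENNReal.ofReal_ne_top
      · exact S18aux.rpow_ne_top' hc00 hc0t _
      · exact S18aux.rpow_ne_top' hκ0 hκt _
      · exact ENNReal.pow_ne_top hSt
    refine ⟨D1.toReal + 1, by positivity, ?_⟩
    intro xB R hR
    set ρ : ℝ≥0∞ := ENNReal.ofReal R with hρdef
    have hρ0 : ρ ≠ 0 := (ENNReal.ofReal_pos.mpr hR).ne'
    have hρt : ρ ≠ ∞ := ENNReal.ofReal_ne_top
    set V : ℝ≥0∞ := volume (ball xB R) with hVdef
    have hV0 : V ≠ 0 := (measure_ball_pos _ _ hR).ne'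
    have hVt : V ≠ ∞ := measure_ball_lt_top.ne
    set W : ℝ≥0∞ := essSup (fun x => ∏ i, v i x) (volume.restrict (ball xB R)) with hWdef
    set L : Fin m → ℕ → ℝ≥0∞ := fun i k =>
      lpOn (conjE (p i)) (fun y => (v i y)⁻¹) (ball xB (2 ^ k * R)) with hLdef
    set ck : ℕ → ℝ≥0∞ := fun k => (c0 * 2 ^ k * ρ) ^ (-α) with hckdef
    have hFsum : ∀ i : Fin m, HmFactor m (γ/(m:ℝ)) (conjE (p i)) (v i) xB R ≤
        ∑' k : ℕ, ck k * L i k := by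
      intro i
      exact S18aux.HmFactor_le_tsum hn m (hq i) (v i) xB hR hα0.le hαdef
    set Cst : ℝ≥0∞ := ENNReal.ofReal C * (c0 * ρ) ^ (-α * (m:ℝ)) * ρ ^ ((n:ℝ) * s) * κ ^ s
      with hCstdef
    have h20 : (2:ℝ≥0∞) ≠ 0 := two_ne_zero
    have h2t : (2:ℝ≥0∞) ≠ ∞ := ENNReal.ofNat_ne_top
    -- per-index bound
    have hterm : ∀ g : Fin m → ℕ,
        W * ∏ i, (ck (g i) * L i (g i)) ≤ Cst * ∏ i, r ^ (g i) := by
      intro g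
      set K : ℕ := ∑ i, g i with hKdef
      have hRK : 0 < 2 ^ K * R := by positivity
      set V' : ℝ≥0∞ := volume (ball xB (2 ^ K * R)) with hV'def
      have hV'0 : V' ≠ 0 := (measure_ball_pos _ _ hRK).ne'
      have hV't : V' ≠ ∞ := measure_ball_lt_top.ne
      set W' : ℝ≥0∞ :=
        essSup (fun x => ∏ i, v i x) (volume.restrict (ball xB (2 ^ K * R))) with hW'def
      set L' : Fin m → ℝ≥0∞ :=
        fun i => lpOn (conjE (p i)) (fun y => (v i y)⁻¹) (ball xB (2 ^ K * R)) with hL'def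
      have hWW : W ≤ W' := by
        refine essSup_mono_measure (Measure.absolutelyContinuous_of_le
          (Measure.restrict_mono (ball_subset_ball ?_) le_rfl))
        have h1 : (1:ℝ) ≤ 2 ^ K := by
          calc (1:ℝ) = 2 ^ 0 := by norm_num
            _ ≤ 2 ^ K := pow_le_pow_right₀ (by norm_num) (Nat.zero_le K)
        nlinarith
      have hLL : ∀ i, L i (g i) ≤ L' i := by
        intro i
        refine S18aux.lpOn_mono_set _ _ (ball_subset_ball ?_)
        have h2 : (2:ℝ) ^ (g i) ≤ 2 ^ K :=
          pow_le_pow_right₀ (by norm_num)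
            (Finset.single_le_sum (fun j _ => Nat.zero_le _) (Finset.mem_univ i))
        exact mul_le_mul_of_nonneg_right h2 hR.le
      have hxx' : V' ^ s * V' ^ (-s) = 1 := by
        rw [← ENNReal.rpow_add _ _ hV'0 hV't]
        simp
      have hprodA : ∏ i, (V' ^ (-(e i)) * L' i) = V' ^ (-s) * ∏ i, L' i := by
        rw [Finset.prod_mul_distrib, hsum_e V' hV'0 hV't]
      have hApp := hAp xB (2 ^ K * R) hRK
      have hc : W' * ∏ i, L' i ≤ ENNReal.ofReal C * V' ^ s := by
        calc W' * ∏ i, L' i = V' ^ s * (W' * (V' ^ (-s) * ∏ i, L' i)) := by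
              rw [show W' * ∏ i, L' i = (V' ^ s * V' ^ (-s)) * (W' * ∏ i, L' i) by
                rw [hxx', one_mul]]
              ring
          _ = V' ^ s * (W' * ∏ i, (V' ^ (-(e i)) * L' i)) := by rw [hprodA]
          _ ≤ V' ^ s * ENNReal.ofReal C := mul_le_mul_right hApp _
          _ = ENNReal.ofReal C * V' ^ s := mul_comm _ _
      have hofR : ENNReal.ofReal (2 ^ K * R) = 2 ^ K * ρ := by
        rw [ENNReal.ofReal_mul (by positivity), ENNReal.ofReal_pow (by norm_num)]
        norm_num [hρdef]
      have hck1 : ∀ k : ℕ, ck k = (c0 * ρ) ^ (-α) * (2:ℝ≥0∞) ^ ((k:ℝ) * (-α)) := by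
        intro k
        show (c0 * (2:ℝ≥0∞) ^ k * ρ) ^ (-α) = _
        rw [show c0 * (2:ℝ≥0∞) ^ k * ρ = (c0 * ρ) * 2 ^ k by ring,
          ENNReal.mul_rpow_of_ne_top (ENNReal.mul_ne_top hc0t hρt)
            (ENNReal.pow_ne_top h2t),
          ← ENNReal.rpow_natCast (2:ℝ≥0∞) k, ← ENNReal.rpow_mul]
      have hprodck : ∏ i, ck (g i) =
          (c0 * ρ) ^ (-α * (m:ℝ)) * ∏ i, (2:ℝ≥0∞) ^ ((g i:ℝ) * (-α)) := by
        calc ∏ i, ck (g i)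
            = ∏ i, ((c0 * ρ) ^ (-α) * (2:ℝ≥0∞) ^ ((g i:ℝ) * (-α))) :=
              Finset.prod_congr rfl fun i _ => hck1 (g i)
          _ = (∏ _i : Fin m, (c0 * ρ) ^ (-α)) * ∏ i, (2:ℝ≥0∞) ^ ((g i:ℝ) * (-α)) :=
              Finset.prod_mul_distrib
          _ = _ := by
              rw [Finset.prod_const, Finset.card_univ, Fintype.card_fin,
                ← ENNReal.rpow_natCast ((c0 * ρ) ^ (-α)) m, ← ENNReal.rpow_mul]
      have hV's : V' ^ s = (2:ℝ≥0∞) ^ ((K:ℝ) * ((n:ℝ) * s)) * ρ ^ ((n:ℝ) * s) * κ ^ s := by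
        rw [hV'def, S18aux.vpow_ball hn xB hRK.le s, hofR,
          ENNReal.mul_rpow_of_ne_top (ENNReal.pow_ne_top h2t) hρt,
          ← ENNReal.rpow_natCast (2:ℝ≥0∞) K, ← ENNReal.rpow_mul, mul_assoc]
      have hKcast : (K:ℝ) = ∑ i, ((g i : ℕ) : ℝ) := by rw [hKdef]; push_cast; ring
      have h2merge : (∏ i, (2:ℝ≥0∞) ^ ((g i:ℝ) * (-α))) * (2:ℝ≥0∞) ^ ((K:ℝ) * ((n:ℝ) * s))
          = ∏ i, r ^ (g i) := by
        calc (∏ i, (2:ℝ≥0∞) ^ ((g i:ℝ) * (-α))) * (2:ℝ≥0∞) ^ ((K:ℝ) * ((n:ℝ) * s))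
            = (2:ℝ≥0∞) ^ (∑ i, (g i:ℝ) * (-α)) *
                (2:ℝ≥0∞) ^ ((∑ i, ((g i : ℕ) : ℝ)) * ((n:ℝ) * s)) := by
              rw [S18aux.prod_rpow _ _ h20 h2t, hKcast]
          _ = (2:ℝ≥0∞) ^ (∑ i, (g i:ℝ) * ((n:ℝ) * s - α)) := by
              rw [← ENNReal.rpow_add _ _ h20 h2t]
              congr 1
              rw [Finset.sum_mul, ← Finset.sum_add_distrib]
              exact Finset.sum_congr rfl fun i _ => by ring
          _ = ∏ i, (2:ℝ≥0∞) ^ ((g i:ℝ) * ((n:ℝ) * s - α)) :=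
              (S18aux.prod_rpow _ _ h20 h2t).symm
          _ = ∏ i, r ^ (g i) := by
              refine Finset.prod_congr rfl fun i _ => ?_
              rw [hrdef, ← ENNReal.rpow_natCast ((2:ℝ≥0∞) ^ ((n:ℝ) * s - α)) (g i),
                ← ENNReal.rpow_mul, mul_comm]
      calc W * ∏ i, (ck (g i) * L i (g i))
          = (∏ i, ck (g i)) * (W * ∏ i, L i (g i)) := by
            rw [Finset.prod_mul_distrib]; ring
        _ ≤ (∏ i, ck (g i)) * (W' * ∏ i, L' i) :=
            mul_le_mul_right
              (mul_le_mul hWW (Finset.prod_le_prod' fun i _ => hLL i) zero_le zero_le) _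
        _ ≤ (∏ i, ck (g i)) * (ENNReal.ofReal C * V' ^ s) := mul_le_mul_right hc _
        _ = Cst * ∏ i, r ^ (g i) := by
            rw [hprodck, hV's, hCstdef, ← h2merge]
            ring
    -- final constant collapse
    have hfinal : V ^ (-((δ - 1) / (n:ℝ))) * (Cst * ((1 - r)⁻¹) ^ (m:ℕ)) = D1 := by
      rw [hCstdef, hVdef, S18aux.vpow_ball hn xB hR.le (-((δ - 1) / (n:ℝ))),
        ENNReal.mul_rpow_of_ne_top hc0t hρt]
      have hρz : ρ ^ ((n:ℝ) * (-((δ - 1) / (n:ℝ)))) * ρ ^ (-α * (m:ℝ)) * ρ ^ ((n:ℝ) * s)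
          = 1 := by
        rw [← ENNReal.rpow_add _ _ hρ0 hρt, ← ENNReal.rpow_add _ _ hρ0 hρt]
        have h2 : (n:ℝ) * (-((δ - 1) / (n:ℝ))) = -(δ - 1) := by field_simp
        rw [show (n:ℝ) * (-((δ - 1) / (n:ℝ))) + -α * (m:ℝ) + (n:ℝ) * s = 0 by
          rw [h2]; linarith [hexpkey]]
        exact ENNReal.rpow_zero
      have hκz : κ ^ (-((δ - 1) / (n:ℝ))) * κ ^ s = κ ^ (s + -((δ - 1) / (n:ℝ))) := by
        rw [← ENNReal.rpow_add _ _ hκ0 hκt, add_comm]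
      calc ρ ^ ((n:ℝ) * (-((δ - 1) / (n:ℝ)))) * κ ^ (-((δ - 1) / (n:ℝ))) *
            (ENNReal.ofReal C * (c0 ^ (-α * (m:ℝ)) * ρ ^ (-α * (m:ℝ))) * ρ ^ ((n:ℝ) * s) *
              κ ^ s * ((1 - r)⁻¹) ^ (m:ℕ))
          = (ρ ^ ((n:ℝ) * (-((δ - 1) / (n:ℝ)))) * ρ ^ (-α * (m:ℝ)) * ρ ^ ((n:ℝ) * s)) *
            (κ ^ (-((δ - 1) / (n:ℝ))) * κ ^ s) *
            (ENNReal.ofReal C * c0 ^ (-α * (m:ℝ)) * ((1 - r)⁻¹) ^ (m:ℕ)) := by ring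
        _ = D1 := by
            rw [hρz, hκz, one_mul, hD1def]
            ring
    -- main chain
    calc W * V ^ (-((δ - 1) / (n:ℝ))) *
          ∏ i, HmFactor m (γ / (m:ℝ)) (conjE (p i)) (v i) xB R
        ≤ W * V ^ (-((δ - 1) / (n:ℝ))) *
          ∑' g : Fin m → ℕ, ∏ i, (ck (g i) * L i (g i)) := by
          refine mul_le_mul_right ?_ _
          refine le_trans (Finset.prod_le_prod' fun i _ => hFsum i) ?_
          exact S18aux.prod_tsum_le_tsum_prod fun i k => ck k * L i k
      _ = V ^ (-((δ - 1) / (n:ℝ))) *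
          ∑' g : Fin m → ℕ, W * ∏ i, (ck (g i) * L i (g i)) := by
          rw [ENNReal.tsum_mul_left]
          ring
      _ ≤ V ^ (-((δ - 1) / (n:ℝ))) *
          ∑' g : Fin m → ℕ, Cst * ∏ i, r ^ (g i) :=
          mul_le_mul_right (ENNReal.tsum_le_tsum fun g => hterm g) _
      _ = V ^ (-((δ - 1) / (n:ℝ))) * (Cst * ∑' g : Fin m → ℕ, ∏ i, r ^ (g i)) := by
          rw [ENNReal.tsum_mul_left]
      _ ≤ V ^ (-((δ - 1) / (n:ℝ))) * (Cst * ∏ i : Fin m, ∑' k : ℕ, r ^ k) :=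
          mul_le_mul_right
            (mul_le_mul_right (S18aux.tsum_prod_le_prod_tsum fun _ k => r ^ k) _) _
      _ = V ^ (-((δ - 1) / (n:ℝ))) * (Cst * ((1 - r)⁻¹) ^ (m:ℕ)) := by
          rw [ENNReal.tsum_geometric, Finset.prod_const, Finset.card_univ, Fintype.card_fin]
      _ = D1 := hfinal
      _ ≤ ENNReal.ofReal (D1.toReal + 1) := S18aux.le_ofReal_self_add_one hD1t
  exact ⟨dir1, fun hδτ => ⟨dir1, dir2 hδτ⟩⟩
end
end
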